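/- arXiv:0801.0949 — 8 statements merged into one kernel-verified Lean document; each statement's English description precedes it below -/
import Mathlib

section
/- Let (A, L) and (B, M) be live automata with the same external actions and assume there is an image-finite liveness-preserving backward simulation b = (g, h) from (A, L) to (B, M) with respect to invariants I_A and I_B. Let α be any execution of A. Then the digraph G induced by α, b, I_B, L, and M satisfies: (1) for each i with 0 ≤ i ≤ |α| there is at least one node of G of the form (u, i); (2) the roots of G (nodes with no incoming edge) are exactly the nodes of the form (u, 0); (3) G has finitely many roots; (4) each node of G has finite outdegree; and (5) each node of G is reachable from some root of G. -/
/- Background formalization: automata, executions, traces, complemented-pairs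
   liveness conditions, liveness-preserving simulation relations, etc. -/

open Classical

section AutomatonDefs

/-- An automaton over a type `S` of states and a type `Act` of actions. -/
structure Automaton (S : Type*) (Act : Type*) where
  start : Set S
  start_nonempty : start.Nonempty
  ext : Set Act
  internal : Set Act
  ext_int_disjoint : Disjoint ext internal
  steps : Set (S × Act × S)
  steps_valid : ∀ t ∈ steps, t.2.1 ∈ ext ∪ internal

variable {S SA SB Act : Type*}

/-- A finite execution fragment `s₀ a₁ s₁ ⋯ a_len s_len`; only the values
`st i` for `i ≤ len` and `act i` for `i < len` are relevant
(`act i` is the action between `st i` and `st (i+1)`). -/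
structure FinFrag (S : Type*) (Act : Type*) where
  len : ℕ
  st : ℕ → S
  act : ℕ → Act

def FinFrag.IsFragOf (f : FinFrag S Act) (A : Automaton S Act) : Prop :=
  ∀ i < f.len, (f.st i, f.act i, f.st (i + 1)) ∈ A.steps

def FinFrag.IsExecOf (f : FinFrag S Act) (A : Automaton S Act) : Prop :=
  f.IsFragOf A ∧ f.st 0 ∈ A.start

def FinFrag.fstate (f : FinFrag S Act) : S := f.st 0

def FinFrag.lstate (f : FinFrag S Act) : S := f.st f.len

/-- A finite execution fragment meets a set `X` of states iff some state along
it lies in `X`. -/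
def FinFrag.Meets (f : FinFrag S Act) (X : Set S) : Prop := ∃ i ≤ f.len, f.st i ∈ X

def FinFrag.Prefix (f g : FinFrag S Act) : Prop :=
  f.len ≤ g.len ∧ (∀ i ≤ f.len, f.st i = g.st i) ∧ ∀ i < f.len, f.act i = g.act i

def FinFrag.StrictPrefix (f g : FinFrag S Act) : Prop :=
  f.Prefix g ∧ f.len < g.len

/-- Equality of finite fragments (up to irrelevant values). -/
def FinFrag.Equiv (f g : FinFrag S Act) : Prop :=
  f.len = g.len ∧ (∀ i ≤ f.len, f.st i = g.st i) ∧ ∀ i < f.len, f.act i = g.act i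

/-- The trace of a finite list of actions: the sublist of external actions. -/
noncomputable def ltrace (ext : Set Act) (l : List Act) : List Act :=
  l.filter fun a => decide (a ∈ ext)

/-- The trace of a finite execution fragment. -/
noncomputable def FinFrag.trace (f : FinFrag S Act) (ext : Set Act) : List Act :=
  ltrace ext ((List.range f.len).map f.act)

/-- trace(a) = a if a is external, the empty sequence otherwise. -/
noncomputable def atrace (ext : Set Act) (a : Act) : List Act :=
  if a ∈ ext then [a] else []

/-- The trace of the segment of actions `b_{j+1} ⋯ b_k` (0-indexed:
`act j, …, act (k-1)`) of an execution with actions `act`. -/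
noncomputable def segTrace (ext : Set Act) (act : ℕ → Act) (j k : ℕ) : List Act :=
  ltrace ext ((List.range (k - j)).map fun t => act (j + t))

/-- An infinite execution `s₀ a₁ s₁ a₂ s₂ ⋯` (with `act i` the action between
`st i` and `st (i+1)`). -/
structure InfExec (S : Type*) (Act : Type*) where
  st : ℕ → S
  act : ℕ → Act

def InfExec.IsExecOf (e : InfExec S Act) (A : Automaton S Act) : Prop :=
  e.st 0 ∈ A.start ∧ ∀ i, (e.st i, e.act i, e.st (i + 1)) ∈ A.steps

/-- The prefix `α|_n` of an infinite execution. -/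
def InfExec.take (e : InfExec S Act) (n : ℕ) : FinFrag S Act := ⟨n, e.st, e.act⟩

/-- An infinite execution extends a finite one. -/
def InfExec.Extends (e : InfExec S Act) (f : FinFrag S Act) : Prop :=
  (∀ i ≤ f.len, e.st i = f.st i) ∧ ∀ i < f.len, e.act i = f.act i

/-- `P n` holds for infinitely many `n`. -/
def InfOften (P : ℕ → Prop) : Prop := ∀ n, ∃ m, n ≤ m ∧ P m

/-- A complemented pair `⟨R, G⟩` of sets of states. -/
structure CPair (S : Type*) where
  R : Set S
  G : Set S

/-- `α ⊨ p`: if `α` contains infinitely many states in `p.R` then it contains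
infinitely many states in `p.G`. -/
def InfExec.Sat (e : InfExec S Act) (p : CPair S) : Prop :=
  InfOften (fun n => e.st n ∈ p.R) → InfOften fun n => e.st n ∈ p.G

/-- The live executions of `(A, L)`. -/
def lexecs (A : Automaton S Act) (L : Set (CPair S)) : Set (InfExec S Act) :=
  {e | e.IsExecOf A ∧ ∀ p ∈ L, e.Sat p}

/-- Machine closure: `(A, L)` is a live automaton (equivalently, `L` is a
complemented-pairs liveness condition over `A`). -/
def IsLivenessCondition (A : Automaton S Act) (L : Set (CPair S)) : Prop :=
  ∀ f : FinFrag S Act, f.IsExecOf A → ∃ e ∈ lexecs A L, e.Extends f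

/-- The semantic closure of `L` in `A`. -/
def closL (A : Automaton S Act) (L : Set (CPair S)) : Set (CPair S) :=
  {p | ∀ e ∈ lexecs A L, e.Sat p}

/-- A state is reachable iff it occurs in some execution. -/
def Reachable (A : Automaton S Act) (s : S) : Prop :=
  ∃ f : FinFrag S Act, f.IsExecOf A ∧ ∃ i ≤ f.len, f.st i = s

/-- An invariant is a superset of the reachable states. -/
def IsAutInvariant (A : Automaton S Act) (I : Set S) : Prop :=
  ∀ s, Reachable A s → s ∈ I

/-- `g[s]` for a relation `g ⊆ states(A) × states(B)`. -/
def gImg (g : Set (SA × SB)) (s : SA) : Set SB := {u | (s, u) ∈ g}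

def ImageFinite (g : Set (SA × SB)) : Prop := ∀ s, (gImg g s).Finite

/-- A transition `s →a s'` of `A` is always-silent (w.r.t. `g`, `I_A`, `I_B`). -/
def AlwaysSilent (A : Automaton SA Act) (B : Automaton SB Act)
    (IA : Set SA) (IB : Set SB) (g : Set (SA × SB)) (s : SA) (a : Act) (s' : SA) : Prop :=
  s ∈ IA ∧ ∀ β : FinFrag SB Act, β.IsFragOf B → β.fstate ∈ gImg g s ∩ IB →
    β.lstate ∈ gImg g s' → β.trace B.ext = atrace A.ext a → β.len = 0

/-- A transition `s →a s'` of `A` is sometimes-silent (w.r.t. `g`, `I_A`, `I_B`). -/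
def SometimesSilent (A : Automaton SA Act) (B : Automaton SB Act)
    (IA : Set SA) (IB : Set SB) (g : Set (SA × SB)) (s : SA) (a : Act) (s' : SA) : Prop :=
  s ∈ IA ∧ ∃ β : FinFrag SB Act, β.IsFragOf B ∧ β.fstate ∈ gImg g s ∩ IB ∧
    β.lstate ∈ gImg g s' ∧ β.trace B.ext = atrace A.ext a ∧ β.len = 0

/-- `(g, h)` is a liveness-preserving forward simulation from `(A, L)` to
`(B, M)` with respect to invariants `I_A`, `I_B`. -/
structure IsLPForwardSim (A : Automaton SA Act) (B : Automaton SB Act)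
    (L : Set (CPair SA)) (M : Set (CPair SB)) (IA : Set SA) (IB : Set SB)
    (g : Set (SA × SB)) (h : CPair SB → CPair SA) : Prop where
  h_total : ∀ q ∈ M, h q ∈ closL A L
  start_cond : ∀ s ∈ A.start, ∃ u ∈ B.start, (s, u) ∈ g
  step_cond : ∀ s a s', (s, a, s') ∈ A.steps → s ∈ IA → ∀ u ∈ gImg g s ∩ IB,
    ∃ β : FinFrag SB Act, β.IsFragOf B ∧ β.fstate = u ∧ β.lstate ∈ gImg g s' ∧
      β.trace B.ext = atrace A.ext a ∧
      ∀ q ∈ M, (β.Meets q.R → s ∈ (h q).R ∨ s' ∈ (h q).R) ∧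
        ((s ∈ (h q).G ∨ s' ∈ (h q).G) → β.Meets q.G)
  nonsilent : ∀ e ∈ lexecs A L,
    InfOften fun n => ¬ AlwaysSilent A B IA IB g (e.st n) (e.act n) (e.st (n + 1))

/-- `(g, h)` is a liveness-preserving backward simulation from `(A, L)` to
`(B, M)` with respect to invariants `I_A`, `I_B`. -/
structure IsLPBackwardSim (A : Automaton SA Act) (B : Automaton SB Act)
    (L : Set (CPair SA)) (M : Set (CPair SB)) (IA : Set SA) (IB : Set SB)
    (g : Set (SA × SB)) (h : CPair SB → CPair SA) : Prop where
  h_total : ∀ q ∈ M, h q ∈ closL A L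
  nonempty_cond : ∀ s ∈ IA, (gImg g s ∩ IB).Nonempty
  start_cond : ∀ s ∈ A.start, gImg g s ∩ IB ⊆ B.start
  step_cond : ∀ s a s', (s, a, s') ∈ A.steps → s ∈ IA → ∀ u' ∈ gImg g s' ∩ IB,
    ∃ β : FinFrag SB Act, β.IsFragOf B ∧ β.fstate ∈ gImg g s ∩ IB ∧ β.lstate = u' ∧
      β.trace B.ext = atrace A.ext a ∧
      ∀ q ∈ M, (β.Meets q.R → s ∈ (h q).R ∨ s' ∈ (h q).R) ∧
        ((s ∈ (h q).G ∨ s' ∈ (h q).G) → β.Meets q.G)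
  nonsilent : ∀ e ∈ lexecs A L,
    InfOften fun n => ¬ SometimesSilent A B IA IB g (e.st n) (e.act n) (e.st (n + 1))

/-- Live index mapping from a finite execution `α` of `A` to a finite
execution `β` of `B` with respect to `(R, H)`. -/
structure LiveIndexMapFF (A : Automaton SA Act) (B : Automaton SB Act)
    (R : Set (SA × SB)) (M : Set (CPair SB)) (H : CPair SB → CPair SA)
    (α : FinFrag SA Act) (β : FinFrag SB Act) (m : ℕ → ℕ) : Prop where
  zero : m 0 = 0
  mono : ∀ i j, i ≤ j → j ≤ α.len → m i ≤ m j
  bound : ∀ i ≤ α.len, m i ≤ β.len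
  rel : ∀ i ≤ α.len, (α.st i, β.st (m i)) ∈ R
  tr : ∀ i, 0 < i → i ≤ α.len →
    segTrace B.ext β.act (m (i - 1)) (m i) = atrace A.ext (α.act (i - 1))
  cofinal : ∀ j ≤ β.len, ∃ i ≤ α.len, j ≤ m i
  pairR : ∀ q ∈ M, ∀ i, 0 < i → i ≤ α.len →
    (∃ j, m (i - 1) ≤ j ∧ j ≤ m i ∧ β.st j ∈ q.R) →
      α.st (i - 1) ∈ (H q).R ∨ α.st i ∈ (H q).R
  pairG : ∀ q ∈ M, ∀ i, 0 < i → i ≤ α.len →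
    (α.st (i - 1) ∈ (H q).G ∨ α.st i ∈ (H q).G) →
      ∃ j, m (i - 1) ≤ j ∧ j ≤ m i ∧ β.st j ∈ q.G

/-- Live index mapping from an infinite execution `α` of `A` to an infinite
execution `β` of `B` with respect to `(R, H)`. -/
structure LiveIndexMapII (A : Automaton SA Act) (B : Automaton SB Act)
    (R : Set (SA × SB)) (M : Set (CPair SB)) (H : CPair SB → CPair SA)
    (α : InfExec SA Act) (β : InfExec SB Act) (m : ℕ → ℕ) : Prop where
  zero : m 0 = 0
  mono : Monotone m
  rel : ∀ i, (α.st i, β.st (m i)) ∈ R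
  tr : ∀ i, 0 < i →
    segTrace B.ext β.act (m (i - 1)) (m i) = atrace A.ext (α.act (i - 1))
  cofinal : ∀ j, ∃ i, j ≤ m i
  pairR : ∀ q ∈ M, ∀ i, 0 < i →
    (∃ j, m (i - 1) ≤ j ∧ j ≤ m i ∧ β.st j ∈ q.R) →
      α.st (i - 1) ∈ (H q).R ∨ α.st i ∈ (H q).R
  pairG : ∀ q ∈ M, ∀ i, 0 < i →
    (α.st (i - 1) ∈ (H q).G ∨ α.st i ∈ (H q).G) →
      ∃ j, m (i - 1) ≤ j ∧ j ≤ m i ∧ β.st j ∈ q.G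

/-- The trace of an infinite execution, as a partial sequence: position `n`
holds the `n`-th external action, if it exists. -/
noncomputable def itrace (ext : Set Act) (act : ℕ → Act) : ℕ → Option Act := fun n =>
  if h : ∃ i, act i ∈ ext ∧ {j | j < i ∧ act j ∈ ext}.ncard = n then some (act h.choose)
  else none

/-- The set of traces of a set of infinite executions. -/
noncomputable def tracesOf (ext : Set Act) (Φ : Set (InfExec S Act)) :
    Set (ℕ → Option Act) :=
  (fun e => itrace ext e.act) '' Φ

/-- `r ⪯ w` for a strict order `lt`. -/
def pLe (lt : CPair S → CPair S → Prop) (r w : CPair S) : Prop := lt r w ∨ r = w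

/-- The immediate successors of `r` in `(P, lt)`. -/
def succSet (P : Set (CPair S)) (lt : CPair S → CPair S → Prop) (r : CPair S) :
    Set (CPair S) :=
  {w | w ∈ P ∧ lt r w ∧ ∀ w' ∈ P, pLe lt r w' → lt w' w → r = w'}

/-- No state occurs infinitely often along any execution in `φ`. -/
def NoInfRep (φ : Set (InfExec S Act)) : Prop :=
  ∀ e ∈ φ, ∀ s : S, {n | e.st n = s}.Finite

/-- `γ ⊴ α`: some suffix of `γ` maps into `α` as in the robustness definition. -/
def Subsumes (γ α : InfExec S Act) : Prop :=
  ∃ k : ℕ, ∃ m : ℕ → ℕ, (∀ i, α.st (m i) = γ.st (k + i)) ∧ ∀ i, {j | m j = i}.Finite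

/-- A live execution property for `A`. -/
def IsLiveExecProperty (A : Automaton S Act) (φ : Set (InfExec S Act)) : Prop :=
  (∀ e ∈ φ, e.IsExecOf A) ∧
    ∀ f : FinFrag S Act, f.IsExecOf A → ∃ e ∈ φ, e.Extends f

/-- `φ` is robust for `A`. -/
def Robust (A : Automaton S Act) (φ : Set (InfExec S Act)) : Prop :=
  ∀ γ α : InfExec S Act, γ.IsExecOf A → α.IsExecOf A → Subsumes γ α → γ ∈ φ → α ∈ φ

/-- `A` is a forest automaton: each reachable state is the last state of
exactly one finite execution. -/
def IsForest (A : Automaton S Act) : Prop :=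
  ∀ f g : FinFrag S Act, f.IsExecOf A → g.IsExecOf A → f.lstate = g.lstate → f.Equiv g

/-- A (finite or infinite) execution, with length in `ℕ∞`. -/
structure ExecE (S : Type*) (Act : Type*) where
  len : ℕ∞
  st : ℕ → S
  act : ℕ → Act

def ExecE.IsExecOf (e : ExecE S Act) (A : Automaton S Act) : Prop :=
  e.st 0 ∈ A.start ∧ ∀ i : ℕ, (i : ℕ∞) < e.len → (e.st i, e.act i, e.st (i + 1)) ∈ A.steps

/-- Node of the digraph induced by `α`, `b = (g,h)`, `I_B`, `L`, `M`. -/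
def DNode (IB : Set SB) (g : Set (SA × SB)) (α : ExecE SA Act) (x : SB × ℕ) : Prop :=
  (x.2 : ℕ∞) ≤ α.len ∧ x.1 ∈ gImg g (α.st x.2) ∩ IB

/-- Edge of the digraph induced by `α`, `b = (g,h)`, `I_B`, `L`, `M`. -/
def DEdge (A : Automaton SA Act) (B : Automaton SB Act) (IB : Set SB)
    (g : Set (SA × SB)) (M : Set (CPair SB)) (h : CPair SB → CPair SA)
    (α : ExecE SA Act) (x y : SB × ℕ) : Prop :=
  DNode IB g α x ∧ DNode IB g α y ∧ y.2 = x.2 + 1 ∧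
  ∃ β : FinFrag SB Act, β.IsFragOf B ∧ β.fstate = x.1 ∧ β.lstate = y.1 ∧
    β.trace B.ext = atrace A.ext (α.act x.2) ∧
    ∀ q ∈ M, (β.Meets q.R → α.st x.2 ∈ (h q).R ∨ α.st (x.2 + 1) ∈ (h q).R) ∧
      ((α.st x.2 ∈ (h q).G ∨ α.st (x.2 + 1) ∈ (h q).G) → β.Meets q.G)

/-- Root of the induced digraph: a node with no incoming edge. -/
def DRoot (A : Automaton SA Act) (B : Automaton SB Act) (IB : Set SB)
    (g : Set (SA × SB)) (M : Set (CPair SB)) (h : CPair SB → CPair SA)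
    (α : ExecE SA Act) (x : SB × ℕ) : Prop :=
  DNode IB g α x ∧ ¬ ∃ y, DEdge A B IB g M h α y x

end AutomatonDefs

/-- properties of the digraph induced by an execution `α` of `A`,
an image-finite liveness-preserving backward simulation `b = (g, h)`, `I_B`,
`L`, and `M`. -/
theorem stmt3 {SA SB Act : Type*} (A : Automaton SA Act) (B : Automaton SB Act)
    (L : Set (CPair SA)) (M : Set (CPair SB))
    (hL : IsLivenessCondition A L) (hM : IsLivenessCondition B M)
    (hext : A.ext = B.ext)
    (IA : Set SA) (IB : Set SB)
    (hIA : IsAutInvariant A IA) (hIB : IsAutInvariant B IB)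
    (g : Set (SA × SB)) (h : CPair SB → CPair SA)
    (hsim : IsLPBackwardSim A B L M IA IB g h) (hfin : ImageFinite g)
    (α : ExecE SA Act) (hα : α.IsExecOf A) :
    (∀ i : ℕ, (i : ℕ∞) ≤ α.len → ∃ u, DNode IB g α (u, i)) ∧
    (∀ x, DRoot A B IB g M h α x ↔ DNode IB g α x ∧ x.2 = 0) ∧
    {x | DRoot A B IB g M h α x}.Finite ∧
    (∀ x, DNode IB g α x → {y | DEdge A B IB g M h α x y}.Finite) ∧
    (∀ x, DNode IB g α x →
      ∃ r, DRoot A B IB g M h α r ∧ Relation.ReflTransGen (DEdge A B IB g M h α) r x) := by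

  have hIAst : ∀ i : ℕ, (i : ℕ∞) ≤ α.len → α.st i ∈ IA := by
    intro i hi
    apply hIA
    refine ⟨⟨i, α.st, α.act⟩, ⟨?_, hα.1⟩, i, le_rfl, rfl⟩
    intro j hj
    exact hα.2 j (lt_of_lt_of_le (by exact_mod_cast hj) hi)
  have hedge : ∀ (i : ℕ) (u : SB), ((i + 1 : ℕ) : ℕ∞) ≤ α.len →
      u ∈ gImg g (α.st (i + 1)) ∩ IB →
      ∃ u', DEdge A B IB g M h α (u', i) (u, i + 1) := by
    intro i u hle hu
    have hlt : (i : ℕ∞) < α.len :=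
      lt_of_lt_of_le (by exact_mod_cast Nat.lt_succ_self i) hle
    have hstep := hα.2 i hlt
    have hsIA := hIAst i hlt.le
    obtain ⟨β, hβfrag, hβf, hβl, hβtr, hβpair⟩ :=
      hsim.step_cond _ _ _ hstep hsIA u hu
    exact ⟨β.fstate, ⟨hlt.le, hβf⟩, ⟨hle, hu⟩, rfl, β, hβfrag, rfl, hβl, hβtr, hβpair⟩
  have hnode0 : ∀ i : ℕ, (i : ℕ∞) ≤ α.len → ∃ u, DNode IB g α (u, i) := by
    intro i hi
    obtain ⟨u, hu⟩ := hsim.nonempty_cond _ (hIAst i hi)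
    exact ⟨u, hi, hu⟩
  have hroot : ∀ x, DRoot A B IB g M h α x ↔ DNode IB g α x ∧ x.2 = 0 := by
    rintro ⟨u, i⟩
    constructor
    · rintro ⟨hn, hne⟩
      refine ⟨hn, ?_⟩
      by_contra h0
      obtain ⟨k, rfl⟩ := Nat.exists_eq_succ_of_ne_zero h0
      obtain ⟨u', he⟩ := hedge k u hn.1 hn.2
      exact hne ⟨(u', k), he⟩
    · rintro ⟨hn, h0⟩
      refine ⟨hn, ?_⟩
      rintro ⟨y, hy⟩
      have h1 := hy.2.2.1
      simp only at h1 h0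
      omega
  refine ⟨hnode0, hroot, ?_, ?_, ?_⟩
  · apply Set.Finite.subset ((hfin (α.st 0)).prod (Set.finite_singleton 0))
    intro x hx
    obtain ⟨hn, h0⟩ := (hroot x).mp hx
    refine ⟨?_, h0⟩
    have := hn.2.1
    rwa [h0] at this
  · intro x hx
    apply Set.Finite.subset ((hfin (α.st (x.2 + 1))).prod (Set.finite_singleton (x.2 + 1)))
    intro y hy
    have h1 := hy.2.2.1
    have h2 := hy.2.1.2.1
    rw [h1] at h2
    exact ⟨h2, h1⟩
  · have hreach : ∀ (i : ℕ) (u : SB), DNode IB g α (u, i) →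
        ∃ r, DRoot A B IB g M h α r ∧
          Relation.ReflTransGen (DEdge A B IB g M h α) r (u, i) := by
      intro i
      induction i with
      | zero => exact fun u hn => ⟨(u, 0), (hroot (u, 0)).mpr ⟨hn, rfl⟩, .refl⟩
      | succ k ih =>
        intro u hn
        obtain ⟨u', he⟩ := hedge k u hn.1 hn.2
        obtain ⟨r, hr, hpath⟩ := ih u' he.1
        exact ⟨r, hr, hpath.tail he⟩
    intro x hx
    exact hreach x.2 x.1 hx
end

section
/- Let (A, L) and (B, M) be live automata with the same external actions such that there is an image-finite liveness-preserving backward simulation b = (g, h) from (A, L) to (B, M) with respect to some invariants. Let α be an arbitrary live execution of (A, L). Then there exists a collection (α'_i, m_i)_{i ≥ 0} of finite executions of B and mappings such that: (1) for all i ≥ 0, m_i is a live index mapping from the prefix α|_i to α'_i with respect to b; (2) for all i > 0, α'_{i−1} is a prefix of α'_i and m_{i−1} equals the restriction of m_i to {0, …, i−1}; and (3) α'_{i−1} is a strict prefix of α'_i for infinitely many i > 0. -/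
/- Background formalization: automata, executions, traces, complemented-pairs
   liveness conditions, liveness-preserving simulation relations, etc. -/

open Classical

section MyAuxStmt4

variable {SA SB Act : Type*}

/-- Auxiliary: path of length `n` in a leveled digraph. -/
def PathP {SB : Type*} (Node : ℕ → SB → Prop) (Edge : ℕ → SB → SB → Prop)
    (n : ℕ) (v : ℕ → SB) : Prop :=
  (∀ j, j ≤ n → Node j (v j)) ∧ ∀ j, j < n → Edge j (v j) (v (j+1))

/-- Auxiliary: `u` at level `i` lies on arbitrarily long paths. -/
def GoodP {SB : Type*} (Node : ℕ → SB → Prop) (Edge : ℕ → SB → SB → Prop)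
    (i : ℕ) (u : SB) : Prop :=
  ∀ n, ∃ m, n ≤ m ∧ ∃ v, PathP Node Edge m v ∧ v i = u

/-- Auxiliary pigeonhole: if frequently some element of a finite set satisfies `Q`,
then some element of the finite set frequently satisfies `Q`. -/
lemma pigeonAux {SB : Type*} {F : Set SB} (hF : F.Finite) (Q : ℕ → SB → Prop)
    (hQ : ∀ n : ℕ, ∃ m, n ≤ m ∧ ∃ x ∈ F, Q m x) :
    ∃ x ∈ F, ∀ n, ∃ m, n ≤ m ∧ Q m x := by
  classical
  by_contra hcon
  push_neg at hcon
  choose N hN using hcon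
  set N' : SB → ℕ := fun x => if hx : x ∈ F then N x hx else 0 with hN'
  obtain ⟨b, hb⟩ := (hF.image N').bddAbove
  obtain ⟨m, hm, x, hx, hQx⟩ := hQ (b+1)
  have h2 : N' x ≤ b := hb (Set.mem_image_of_mem _ hx)
  have h1 : N x hx ≤ m := by
    simp only [hN', dif_pos hx] at h2
    omega
  exact hN x hx m h1 hQx

/-- Auxiliary König lemma: finitely-branching levels with arbitrarily long paths
contain an infinite path. -/
lemma koenigAux {SB : Type*} (Node : ℕ → SB → Prop) (Edge : ℕ → SB → SB → Prop)
    (F : ℕ → Set SB) (hF : ∀ i, (F i).Finite) (hNF : ∀ i u, Node i u → u ∈ F i)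
    (hpaths : ∀ n, ∃ v : ℕ → SB, PathP Node Edge n v) :
    ∃ w : ℕ → SB, (∀ i, Node i (w i)) ∧ ∀ i, Edge i (w i) (w (i+1)) := by
  classical
  have good0 : ∃ u, GoodP Node Edge 0 u := by
    obtain ⟨x, _, hx⟩ := pigeonAux (hF 0)
      (fun m x => ∃ v, PathP Node Edge m v ∧ v 0 = x)
      (fun n => by
        obtain ⟨v, hv⟩ := hpaths n
        exact ⟨n, le_rfl, v 0, hNF 0 _ (hv.1 0 (Nat.zero_le n)), v, hv, rfl⟩)
    exact ⟨x, hx⟩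
  have step : ∀ i u, GoodP Node Edge i u →
      ∃ u', Edge i u u' ∧ GoodP Node Edge (i+1) u' := by
    intro i u hG
    obtain ⟨x, _, hx⟩ := pigeonAux (hF (i+1))
      (fun m x => ∃ v, PathP Node Edge m v ∧ v i = u ∧ v (i+1) = x)
      (fun n => by
        obtain ⟨m, hm, v, hv, hvi⟩ := hG (max n (i+1))
        exact ⟨m, le_trans (le_max_left _ _) hm, v (i+1),
          hNF _ _ (hv.1 (i+1) (le_trans (le_max_right _ _) hm)), v, hv, hvi, rfl⟩)
    refine ⟨x, ?_, ?_⟩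
    · obtain ⟨m, hm, v, hv, hvi, hvi1⟩ := hx (i+1)
      have := hv.2 i (by omega)
      rwa [hvi, hvi1] at this
    · intro n
      obtain ⟨m, hm, v, hv, _, hvi1⟩ := hx n
      exact ⟨m, hm, v, hv, hvi1⟩
  obtain ⟨u0, hu0⟩ := good0
  choose nxt hE hG using step
  let W : ∀ n : ℕ, {u : SB // GoodP Node Edge n u} := fun n =>
    Nat.rec ⟨u0, hu0⟩ (fun i p => ⟨nxt i p.1 p.2, hG i p.1 p.2⟩) n
  refine ⟨fun n => (W n).1, ?_, ?_⟩
  · intro i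
    obtain ⟨m, hm, v, hv, hvi⟩ := (W i).2 i
    have := hv.1 i hm
    rwa [hvi] at this
  · intro i
    exact hE i (W i).1 (W i).2

/-- Node predicate for the digraph used in the proof of `stmt4`. -/
def NodeX (IB : Set SB) (g : Set (SA × SB)) (α : InfExec SA Act)
    (i : ℕ) (u : SB) : Prop :=
  u ∈ gImg g (α.st i) ∩ IB

/-- Edge predicate for the digraph used in the proof of `stmt4`. -/
def EdgeX (A : Automaton SA Act) (B : Automaton SB Act) (M : Set (CPair SB))
    (h : CPair SB → CPair SA) (α : InfExec SA Act) (i : ℕ) (u u' : SB) : Prop :=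
  ∃ fr : FinFrag SB Act, fr.IsFragOf B ∧ fr.fstate = u ∧ fr.lstate = u' ∧
    fr.trace B.ext = atrace A.ext (α.act i) ∧
    ∀ q ∈ M, (fr.Meets q.R → α.st i ∈ (h q).R ∨ α.st (i+1) ∈ (h q).R) ∧
      ((α.st i ∈ (h q).G ∨ α.st (i+1) ∈ (h q).G) → fr.Meets q.G)

end MyAuxStmt4

/-- existence of a collection of finite executions of `B` and live
index mappings corresponding to the prefixes of a live execution of `(A, L)`,
given an image-finite liveness-preserving backward simulation `b = (g, h)`. -/
theorem stmt4 {SA SB Act : Type*} (A : Automaton SA Act) (B : Automaton SB Act)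
    (L : Set (CPair SA)) (M : Set (CPair SB))
    (hL : IsLivenessCondition A L) (hM : IsLivenessCondition B M)
    (hext : A.ext = B.ext)
    (IA : Set SA) (IB : Set SB)
    (hIA : IsAutInvariant A IA) (hIB : IsAutInvariant B IB)
    (g : Set (SA × SB)) (h : CPair SB → CPair SA)
    (hsim : IsLPBackwardSim A B L M IA IB g h) (hfin : ImageFinite g)
    (α : InfExec SA Act) (hα : α ∈ lexecs A L) :
    ∃ (β : ℕ → FinFrag SB Act) (m : ℕ → ℕ → ℕ),
      (∀ i, (β i).IsExecOf B ∧ LiveIndexMapFF A B g M h (α.take i) (β i) (m i)) ∧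
      (∀ i, 0 < i → (β (i - 1)).Prefix (β i) ∧ ∀ j ≤ i - 1, m (i - 1) j = m i j) ∧
      InfOften (fun i => 0 < i ∧ (β (i - 1)).StrictPrefix (β i)) := by
    classical
  have hexec : α.IsExecOf A := hα.1
  have hIAst : ∀ n, α.st n ∈ IA := fun n =>
    hIA _ ⟨⟨n, α.st, α.act⟩, ⟨fun i _ => hexec.2 i, hexec.1⟩, n, le_rfl, rfl⟩
  -- arbitrarily long backward-constructed paths
  have claim1 : ∀ n u, NodeX IB g α n u →
      ∃ v, PathP (NodeX IB g α) (EdgeX A B M h α) n v ∧ v n = u := by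
    intro n
    induction n with
    | zero =>
      intro u hu
      refine ⟨fun _ => u, ⟨?_, ?_⟩, rfl⟩
      · intro j hj
        have hj0 : j = 0 := Nat.le_zero.mp hj
        subst hj0; exact hu
      · intro j hj; exact absurd hj (Nat.not_lt_zero j)
    | succ n ih =>
      intro u hu
      obtain ⟨fr, h1, h2, h3, h4, h5⟩ :=
        hsim.step_cond (α.st n) (α.act n) (α.st (n+1)) (hexec.2 n) (hIAst n) u hu
      obtain ⟨v, ⟨hv1, hv2⟩, hvn⟩ := ih fr.fstate h2
      refine ⟨fun j => if j ≤ n then v j else u, ⟨?_, ?_⟩, ?_⟩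
      · intro j hj
        by_cases hjn : j ≤ n
        · simpa [hjn] using hv1 j hjn
        · have hj1 : j = n+1 := by omega
          subst hj1
          show NodeX IB g α (n+1) (if n+1 ≤ n then v (n+1) else u)
          rw [if_neg hjn]
          exact hu
      · intro j hj
        by_cases hjn : j < n
        · show EdgeX A B M h α j (if j ≤ n then v j else u) (if j+1 ≤ n then v (j+1) else u)
          rw [if_pos (show j ≤ n by omega), if_pos (show j+1 ≤ n by omega)]
          exact hv2 j hjn
        · have hj1 : n = j := by omega
          subst hj1
          show EdgeX A B M h α n (if n ≤ n then v n else u) (if n+1 ≤ n then v (n+1) else u)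
          rw [if_pos le_rfl, if_neg (by omega)]
          exact ⟨fr, h1, hvn.symm, h3, h4, h5⟩
      · show (if n+1 ≤ n then v (n+1) else u) = u
        rw [if_neg (by omega)]
  have hpaths : ∀ n, ∃ v, PathP (NodeX IB g α) (EdgeX A B M h α) n v := by
    intro n
    obtain ⟨u, hu⟩ := hsim.nonempty_cond (α.st n) (hIAst n)
    obtain ⟨v, hv, _⟩ := claim1 n u hu
    exact ⟨v, hv⟩
  obtain ⟨w, hWnode, hWedge⟩ := koenigAux (NodeX IB g α) (EdgeX A B M h α)
    (fun i => gImg g (α.st i)) (fun i => hfin (α.st i)) (fun i u hu => hu.1) hpaths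
  choose f hffrag hffst hflst hftr hfp using hWedge
  -- partial sums of fragment lengths
  set c : ℕ → ℕ := fun n => ∑ t ∈ Finset.range n, (f t).len with hcdef
  have hc0 : c 0 = 0 := by rw [hcdef]; simp
  have hcs : ∀ n, c (n+1) = c n + (f n).len := by
    intro n; rw [hcdef]; exact Finset.sum_range_succ _ n
  have hcm : Monotone c := monotone_nat_of_le_succ fun n => by rw [hcs]; omega
  -- infinitely many fragments are nonempty
  have hpos : ∀ n, ∃ t, n ≤ t ∧ 0 < (f t).len := by
    intro n
    obtain ⟨t, htn, hss⟩ := hsim.nonsilent α hα n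
    refine ⟨t, htn, ?_⟩
    by_contra h0
    have hlen : (f t).len = 0 := by omega
    exact hss ⟨hIAst t, f t, hffrag t, by rw [hffst t]; exact hWnode t,
      by rw [hflst t]; exact (hWnode (t+1)).1, hftr t, hlen⟩
  have hcub : ∀ k, ∃ j, k < c j := by
    intro k
    induction k with
    | zero =>
      obtain ⟨t, _, ht⟩ := hpos 0
      exact ⟨t+1, by rw [hcs]; omega⟩
    | succ k ih =>
      obtain ⟨j, hj⟩ := ih
      obtain ⟨t, htj, ht⟩ := hpos j
      have := hcm htj
      exact ⟨t+1, by rw [hcs]; omega⟩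
  -- the block index of position k
  set J : ℕ → ℕ := fun k => Nat.findGreatest (fun j => c j ≤ k) (hcub k).choose with hJdef
  have hbk : ∀ k, k < c (hcub k).choose := fun k => (hcub k).choose_spec
  have hJ1 : ∀ k, c (J k) ≤ k := by
    intro k
    rw [hJdef]
    show c (Nat.findGreatest (fun j => c j ≤ k) (hcub k).choose) ≤ k
    exact Nat.findGreatest_spec (P := fun j => c j ≤ k) (m := 0) (Nat.zero_le _)
      (by show c 0 ≤ k; omega)
  have hJge : ∀ j k, c j ≤ k → j ≤ J k := by
    intro j k hjk
    rw [hJdef]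
    show j ≤ Nat.findGreatest (fun j => c j ≤ k) (hcub k).choose
    refine Nat.le_findGreatest (P := fun j => c j ≤ k) ?_ hjk
    by_contra hcon
    push_neg at hcon
    have h2 := hcm (le_of_lt hcon)
    have h3 := hbk k
    omega
  have hJ2 : ∀ k, k < c (J k + 1) := by
    intro k
    by_contra hcon
    push_neg at hcon
    have := hJge (J k + 1) k hcon
    omega
  have hblock : ∀ j k, c j ≤ k → k < c (j+1) → J k = j := by
    intro j k h1 h2
    have h3 := hJge j k h1
    have h4 : ¬ (j + 1 ≤ J k) := by
      intro hc
      have := hcm hc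
      have := hJ1 k
      omega
    omega
  set ST : ℕ → SB := fun k => (f (J k)).st (k - c (J k)) with hSTdef
  set ACT : ℕ → Act := fun k => (f (J k)).act (k - c (J k)) with hACTdef
  have hconst : ∀ j d, c (j + d) = c j → w (j + d) = w j := by
    intro j d
    induction d with
    | zero => intro _; rfl
    | succ d ih =>
      intro hcd
      have ha : c j ≤ c (j+d) := hcm (by omega)
      have he : j + (d+1) = (j+d)+1 := by omega
      rw [he] at hcd
      have hb := hcs (j+d)
      have h1 : c (j+d) = c j := by omega
      have hlen : (f (j+d)).len = 0 := by omega
      have h2 : w ((j+d)+1) = w (j+d) := by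
        have e1 : (f (j+d)).lstate = w ((j+d)+1) := hflst (j+d)
        have e2 : (f (j+d)).fstate = w (j+d) := hffst (j+d)
        rw [← e1, ← e2]
        show (f (j+d)).st (f (j+d)).len = (f (j+d)).st 0
        rw [hlen]
      rw [he, h2, ih h1]
  have hSTc : ∀ j, ST (c j) = w j := by
    intro j
    have h1 : j ≤ J (c j) := hJge j (c j) le_rfl
    have h4 : c (J (c j)) = c j := le_antisymm (hJ1 (c j)) (hcm h1)
    have h5 : w (J (c j)) = w j := by
      have hd := hconst j (J (c j) - j)
        (by rw [show j + (J (c j) - j) = J (c j) from by omega]; omega)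
      rwa [show j + (J (c j) - j) = J (c j) from by omega] at hd
    rw [hSTdef]
    show (f (J (c j))).st (c j - c (J (c j))) = w j
    rw [h4, Nat.sub_self]
    exact (hffst (J (c j))).trans h5
  have hSTin : ∀ j k, c j ≤ k → k < c (j+1) → ST k = (f j).st (k - c j) := by
    intro j k h1 h2
    rw [hSTdef]
    show (f (J k)).st (k - c (J k)) = _
    rw [hblock j k h1 h2]
  have hACTin : ∀ j k, c j ≤ k → k < c (j+1) → ACT k = (f j).act (k - c j) := by
    intro j k h1 h2
    rw [hACTdef]
    show (f (J k)).act (k - c (J k)) = _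
    rw [hblock j k h1 h2]
  have hSTcl : ∀ j k, c j ≤ k → k ≤ c (j+1) → ST k = (f j).st (k - c j) := by
    intro j k h1 h2
    rcases lt_or_eq_of_le h2 with h3 | h3
    · exact hSTin j k h1 h3
    · subst h3
      rw [hSTc (j+1)]
      have e : c (j+1) - c j = (f j).len := by have := hcs j; omega
      rw [e, ← hflst j]
      rfl
  -- assemble
  refine ⟨fun i => ⟨c i, ST, ACT⟩, fun _ j => c j, ?_, ?_, ?_⟩
  · intro i
    constructor
    · constructor
      · intro k hk
        have h1 := hJ1 k
        have h2 := hJ2 k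
        have e3 : ST (k+1) = (f (J k)).st (k+1 - c (J k)) :=
          hSTcl (J k) (k+1) (by omega) (by omega)
        have hlen : k - c (J k) < (f (J k)).len := by
          have := hcs (J k); omega
        have hstep := hffrag (J k) (k - c (J k)) hlen
        show (ST k, ACT k, ST (k+1)) ∈ B.steps
        rw [e3, hSTdef, hACTdef]
        have e4 : k+1 - c (J k) = (k - c (J k)) + 1 := by omega
        rw [e4]
        exact hstep
      · show ST 0 ∈ B.start
        have h1 : ST 0 = w 0 := by have := hSTc 0; rwa [hc0] at this
        rw [h1]
        exact hsim.start_cond (α.st 0) hexec.1 (hWnode 0)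
    · refine ⟨rfl, ?_, ?_, ?_, ?_, ?_, ?_, ?_⟩
      · intro i' j' hij _; exact hcm hij
      · intro j hj; exact hcm hj
      · intro j _
        show (α.st j, ST (c j)) ∈ g
        rw [hSTc j]
        exact (hWnode j).1
      · intro j hj0 hji
        obtain ⟨t, rfl⟩ : ∃ t, j = t + 1 := ⟨j - 1, by omega⟩
        simp only [Nat.add_sub_cancel]
        show segTrace B.ext ACT (c t) (c (t+1)) = atrace A.ext (α.act t)
        have hgap : c (t+1) - c t = (f t).len := by have := hcs t; omega
        have hmap : (List.range (c (t+1) - c t)).map (fun r => ACT (c t + r))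
            = (List.range (f t).len).map (f t).act := by
          rw [hgap]
          refine List.map_congr_left ?_
          intro r hr
          have hr' : r < (f t).len := List.mem_range.mp hr
          rw [hACTin t (c t + r) (by omega) (by rw [hcs]; omega)]
          congr 1
          omega
        show ltrace B.ext ((List.range (c (t+1) - c t)).map fun r => ACT (c t + r))
          = atrace A.ext (α.act t)
        rw [hmap]
        exact hftr t
      · intro k hk; exact ⟨i, le_rfl, hk⟩
      · intro q hq j hj0 hji hex
        obtain ⟨t, rfl⟩ : ∃ t, j = t + 1 := ⟨j - 1, by omega⟩
        simp only [Nat.add_sub_cancel] at hex ⊢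
        obtain ⟨k, hk1, hk2, hk3⟩ := hex
        have hMeets : (f t).Meets q.R := by
          refine ⟨k - c t, by have := hcs t; omega, ?_⟩
          rw [← hSTcl t k hk1 hk2]
          exact hk3
        exact (hfp t q hq).1 hMeets
      · intro q hq j hj0 hji hst
        obtain ⟨t, rfl⟩ : ∃ t, j = t + 1 := ⟨j - 1, by omega⟩
        simp only [Nat.add_sub_cancel] at hst ⊢
        obtain ⟨r, hr, hmem⟩ := (hfp t q hq).2 hst
        refine ⟨c t + r, by omega, by rw [hcs]; omega, ?_⟩
        rw [hSTcl t (c t + r) (by omega) (by rw [hcs]; omega)]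
        simpa [Nat.add_sub_cancel_left] using hmem
  · intro i hi
    exact ⟨⟨hcm (by omega), fun _ _ => rfl, fun _ _ => rfl⟩, fun _ _ => rfl⟩
  · intro n
    obtain ⟨t, htn, htl⟩ := hpos n
    refine ⟨t+1, by omega, by omega, ?_⟩
    simp only [Nat.add_sub_cancel]
    exact ⟨⟨hcm (by omega), fun _ _ => rfl, fun _ _ => rfl⟩, by
      show c t < c (t+1)
      rw [hcs]; omega⟩
end

section
/- Let (A, L) and (B, M) be live automata with the same external actions, and let Rℓ = (R, H) where R ⊆ states(A) × states(B) and H : M → clos(L) is a total mapping over M. Let α and α' be arbitrary infinite executions of (A, L) and (B, M) respectively. If (α, α') ∈ Rℓ (i.e., there exists a live index mapping from α to α' with respect to Rℓ), then α ∈ lexecs(A, L) implies α' ∈ lexecs(B, M). -/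
/- Background formalization: automata, executions, traces, complemented-pairs
   liveness conditions, liveness-preserving simulation relations, etc. -/

open Classical

/-- if infinite executions `α` of `(A, L)` and `α'` of `(B, M)`
are related by a live index mapping with respect to `Rℓ = (R, H)`, and `α` is
live, then `α'` is live. -/
theorem stmt5 {SA SB Act : Type*} (A : Automaton SA Act) (B : Automaton SB Act)
    (L : Set (CPair SA)) (M : Set (CPair SB))
    (hL : IsLivenessCondition A L) (hM : IsLivenessCondition B M)
    (hext : A.ext = B.ext)
    (R : Set (SA × SB)) (H : CPair SB → CPair SA)
    (hH : ∀ q ∈ M, H q ∈ closL A L)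
    (α : InfExec SA Act) (α' : InfExec SB Act)
    (hαe : α.IsExecOf A) (hα'e : α'.IsExecOf B)
    (hrel : ∃ m, LiveIndexMapII A B R M H α α' m)
    (hlive : α ∈ lexecs A L) :
    α' ∈ lexecs B M := by
  obtain ⟨m, hm⟩ := hrel
  refine ⟨hα'e, fun q hq hR => ?_⟩
  have hαsat : α.Sat (H q) := (hH q hq) α hlive
  have hRA : InfOften (fun n => α.st n ∈ (H q).R) := by
    intro n
    obtain ⟨j, hj1, hj2⟩ := hR (m (n + 1) + 1)
    have hex : ∃ i, j ≤ m i := hm.cofinal j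
    set i := Nat.find hex with hi
    have hji : j ≤ m i := Nat.find_spec hex
    have hipos : 0 < i := by
      rcases Nat.eq_zero_or_pos i with h0 | h
      · exfalso; have h2 := hji; rw [h0, hm.zero] at h2; omega
      · exact h
    have hlt : m (i - 1) < j := by
      have := Nat.find_min hex (show i - 1 < i by omega)
      omega
    have hin : n + 1 < i := by
      by_contra hcon
      push_neg at hcon
      have : m i ≤ m (n + 1) := hm.mono hcon
      omega
    rcases hm.pairR q hq i hipos ⟨j, le_of_lt hlt, hji, hj2⟩ with h | h
    · exact ⟨i - 1, by omega, h⟩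
    · exact ⟨i, by omega, h⟩
  have hGA := hαsat hRA
  intro n
  obtain ⟨i0, hi0⟩ := hm.cofinal n
  obtain ⟨i, hi1, hi2⟩ := hGA i0
  obtain ⟨j, hj1, hj2, hj3⟩ := hm.pairG q hq (i + 1) (Nat.succ_pos i)
    (by simpa using Or.inl hi2)
  refine ⟨j, ?_, hj3⟩
  have : m i0 ≤ m i := hm.mono hi1
  simp only [Nat.add_sub_cancel] at hj1
  omega
end

section
/- Live Execution Correspondence (backward-simulation case): Let (A, L) and (B, M) be live automata with the same external actions, and suppose there is an image-finite liveness-preserving backward simulation b = (g, h) from (A, L) to (B, M) with respect to some invariants. Then ((A, L), (B, M)) ∈ b: for every live execution α of (A, L) there exists a live execution α' of (B, M) such that (α, α') ∈ b, i.e., there is a live index mapping from α to α' with respect to b. -/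
/- Background formalization: automata, executions, traces, complemented-pairs
   liveness conditions, liveness-preserving simulation relations, etc. -/

open Classical

section Stmt7Aux

variable {X : Type*}

private lemma stmt7_pigeon {T : Set X} (hT : T.Finite) (f : ℕ → X)
    (hf : ∀ n, f n ∈ T) : ∃ u, {n | f n = u}.Infinite := by
  by_contra hcon
  push_neg at hcon
  have hsub : (Set.univ : Set ℕ) ⊆ ⋃ u ∈ T, {n | f n = u} := fun n _ =>
    Set.mem_biUnion (hf n) rfl
  exact Set.infinite_univ (Set.Finite.subset (hT.biUnion fun u _ => hcon u) hsub)

private lemma stmt7_inf_ge {s : Set ℕ} (hs : s.Infinite) (N : ℕ) : ∃ n ∈ s, N ≤ n := by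
  by_contra hcon
  push_neg at hcon
  exact hs (Set.Finite.subset (Set.finite_Iio N) fun n hn => hcon n hn)

private lemma stmt7_dep_choice (P : ℕ → X → Prop) (Q : ℕ → X → X → Prop)
    (h0 : ∃ u, P 0 u) (hstep : ∀ n u, P n u → ∃ u', P (n+1) u' ∧ Q n u u') :
    ∃ U : ℕ → X, (∀ n, P n (U n)) ∧ ∀ n, Q n (U n) (U (n+1)) := by
  let F : (n : ℕ) → {u : X // P n u} := fun n =>
    Nat.rec ⟨h0.choose, h0.choose_spec⟩
      (fun n p => ⟨(hstep n p.1 p.2).choose, (hstep n p.1 p.2).choose_spec.1⟩) n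
  exact ⟨fun n => (F n).1, fun n => (F n).2,
    fun n => (hstep n (F n).1 (F n).2).choose_spec.2⟩

/-- König's lemma for a levelled graph with finite nonempty levels and
backward-extendable edges. -/
private lemma stmt7_koenig (T : ℕ → Set X) (E : ℕ → X → X → Prop)
    (hfin : ∀ n, (T n).Finite) (hne : ∀ n, (T n).Nonempty)
    (hstep : ∀ n u', u' ∈ T (n+1) → ∃ u ∈ T n, E n u u') :
    ∃ U : ℕ → X, (∀ n, U n ∈ T n) ∧ ∀ n, E n (U n) (U (n+1)) := by
  classical
  -- finite chains ending at a prescribed element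
  have chainEx : ∀ N, ∀ u' ∈ T N, ∃ v : ℕ → X,
      ((∀ k ≤ N, v k ∈ T k) ∧ ∀ k < N, E k (v k) (v (k+1))) ∧ v N = u' := by
    intro N
    induction N with
    | zero =>
      intro u' hu'
      refine ⟨fun _ => u', ⟨fun k hk => ?_, fun k hk => absurd hk (Nat.not_lt_zero k)⟩, rfl⟩
      have hk0 : k = 0 := Nat.le_zero.mp hk
      subst hk0; exact hu'
    | succ N ih =>
      intro u' hu'
      obtain ⟨u, hu, hEu⟩ := hstep N u' hu'
      obtain ⟨v, ⟨hv1, hv2⟩, hvN⟩ := ih u hu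
      refine ⟨Function.update v (N+1) u', ⟨fun k hk => ?_, fun k hk => ?_⟩,
        Function.update_self _ _ _⟩
      · rcases Nat.eq_or_lt_of_le hk with heq | hlt
        · rw [heq, Function.update_self]; exact hu'
        · rw [Function.update_of_ne (by omega)]
          exact hv1 k (by omega)
      · rcases Nat.lt_or_ge k N with hkN | hkN
        · rw [Function.update_of_ne (by omega), Function.update_of_ne (by omega)]
          exact hv2 k hkN
        · have hkeq : k = N := by omega
          subst hkeq
          rw [Function.update_of_ne (by omega), Function.update_self, hvN]
          exact hEu
  -- viability
  let Viable : ℕ → X → Prop := fun n u => ∀ N, n ≤ N → ∃ v : ℕ → X,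
    ((∀ k ≤ N, v k ∈ T k) ∧ ∀ k < N, E k (v k) (v (k+1))) ∧ v n = u
  have hv0 : ∃ u, Viable 0 u := by
    have hch : ∀ N : ℕ, ∃ v : ℕ → X,
        (∀ k ≤ N, v k ∈ T k) ∧ ∀ k < N, E k (v k) (v (k+1)) := by
      intro N
      obtain ⟨v, hv, _⟩ := chainEx N (hne N).choose (hne N).choose_spec
      exact ⟨v, hv⟩
    choose v hv using hch
    obtain ⟨u, hufib⟩ := stmt7_pigeon (hfin 0) (fun N => v N 0)
      (fun N => (hv N).1 0 (Nat.zero_le N))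
    refine ⟨u, fun N _ => ?_⟩
    obtain ⟨N', hN'fib, hNN'⟩ := stmt7_inf_ge hufib N
    exact ⟨v N', ⟨⟨fun k hk => (hv N').1 k (hk.trans hNN'),
      fun k hk => (hv N').2 k (hk.trans_le hNN')⟩, hN'fib⟩⟩
  have hvs : ∀ n u, Viable n u → ∃ u', Viable (n+1) u' ∧ E n u u' := by
    intro n u hu
    have hch : ∀ k : ℕ, ∃ v : ℕ → X,
        ((∀ j ≤ n+1+k, v j ∈ T j) ∧ ∀ j < n+1+k, E j (v j) (v (j+1))) ∧ v n = u :=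
      fun k => hu (n+1+k) (by omega)
    choose v hv hvn using hch
    obtain ⟨u', hufib⟩ := stmt7_pigeon (hfin (n+1)) (fun k => v k (n+1))
      (fun k => (hv k).1 (n+1) (by omega))
    have hE : E n u u' := by
      obtain ⟨k, hk, _⟩ := stmt7_inf_ge hufib 0
      have hk' : v k (n+1) = u' := hk
      have hEn := (hv k).2 n (by omega)
      rw [hvn k, hk'] at hEn
      exact hEn
    refine ⟨u', fun N hN => ?_, hE⟩
    obtain ⟨k, hkfib, hkN⟩ := stmt7_inf_ge hufib N
    have hk' : v k (n+1) = u' := hkfib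
    exact ⟨v k, ⟨fun j hj => (hv k).1 j (by omega),
      fun j hj => (hv k).2 j (by omega)⟩, hk'⟩
  obtain ⟨U, hU1, hU2⟩ := stmt7_dep_choice Viable E hv0 hvs
  refine ⟨U, fun n => ?_, hU2⟩
  obtain ⟨v, ⟨hv1, _⟩, hvn⟩ := hU1 n n le_rfl
  exact hvn ▸ hv1 n le_rfl

end Stmt7Aux

/-- Live Execution Correspondence, backward-simulation case. -/
theorem stmt7 {SA SB Act : Type*} (A : Automaton SA Act) (B : Automaton SB Act)
    (L : Set (CPair SA)) (M : Set (CPair SB))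
    (hL : IsLivenessCondition A L) (hM : IsLivenessCondition B M)
    (hext : A.ext = B.ext)
    (IA : Set SA) (IB : Set SB)
    (hIA : IsAutInvariant A IA) (hIB : IsAutInvariant B IB)
    (g : Set (SA × SB)) (h : CPair SB → CPair SA)
    (hsim : IsLPBackwardSim A B L M IA IB g h) (hfin : ImageFinite g) :
    ∀ α ∈ lexecs A L, ∃ α' ∈ lexecs B M, ∃ m, LiveIndexMapII A B g M h α α' m := by
  intro α hα
  have hexec : α.IsExecOf A := hα.1
  have hreach : ∀ n, α.st n ∈ IA := fun n =>
    hIA _ ⟨⟨n, α.st, α.act⟩, ⟨fun i _ => hexec.2 i, hexec.1⟩, n, le_rfl, rfl⟩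
  -- König's lemma gives a matching sequence of B-states with connecting fragments
  obtain ⟨U, hU, hE⟩ := stmt7_koenig (fun n => gImg g (α.st n) ∩ IB)
    (fun n u u' => ∃ β : FinFrag SB Act, β.IsFragOf B ∧ β.fstate = u ∧ β.lstate = u' ∧
      β.trace B.ext = atrace A.ext (α.act n) ∧
      ∀ q ∈ M, (β.Meets q.R → α.st n ∈ (h q).R ∨ α.st (n+1) ∈ (h q).R) ∧
        ((α.st n ∈ (h q).G ∨ α.st (n+1) ∈ (h q).G) → β.Meets q.G))
    (fun n => (hfin (α.st n)).inter_of_left IB)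
    (fun n => hsim.nonempty_cond _ (hreach n))
    (fun n u' hu' => by
      obtain ⟨β, h1, h2, h3, h4, h5⟩ := hsim.step_cond (α.st n) (α.act n) (α.st (n+1))
        (hexec.2 n) (hreach n) u' hu'
      exact ⟨β.fstate, h2, β, h1, rfl, h3, h4, h5⟩)
  choose βn hfrag hfst hlst htrβ hpair using hE
  -- the index function
  obtain ⟨mf, hm0, hmsucc⟩ : ∃ mf : ℕ → ℕ, mf 0 = 0 ∧ ∀ n, mf (n+1) = mf n + (βn n).len :=
    ⟨fun n => Nat.rec 0 (fun k acc => acc + (βn k).len) n, rfl, fun n => rfl⟩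
  have hmmono : Monotone mf := monotone_nat_of_le_succ fun n => by
    rw [hmsucc]; omega
  -- infinitely many nontrivial fragments
  have hns := hsim.nonsilent α hα
  have hpos : ∀ N, ∃ n, N ≤ n ∧ 0 < (βn n).len := by
    intro N
    obtain ⟨n, hn, hns'⟩ := hns N
    refine ⟨n, hn, ?_⟩
    by_contra hlen
    push_neg at hlen
    refine hns' ⟨hreach n, βn n, hfrag n, ?_, ?_, htrβ n, Nat.le_zero.mp hlen⟩
    · rw [hfst n]; exact hU n
    · rw [hlst n]; exact (hU (n+1)).1
  have hcof : ∀ j, ∃ i, j ≤ mf i := by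
    intro j
    induction j with
    | zero => exact ⟨0, Nat.zero_le _⟩
    | succ j ih =>
      obtain ⟨i, hi⟩ := ih
      obtain ⟨n, hn, hlen⟩ := hpos i
      refine ⟨n+1, ?_⟩
      have := hmmono hn
      rw [hmsucc]; omega
  -- each index lies in a unique segment
  have hseg : ∀ j, ∃ n, mf n ≤ j ∧ j < mf (n+1) := by
    intro j
    obtain ⟨i, hi⟩ := hcof (j+1)
    have hP : ∃ n, j < mf n := ⟨i, by omega⟩
    have hk : j < mf (Nat.find hP) := Nat.find_spec hP
    have hk0 : Nat.find hP ≠ 0 := by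
      intro h0
      rw [h0, hm0] at hk
      omega
    refine ⟨Nat.find hP - 1, ?_, ?_⟩
    · have hmin := Nat.find_min hP (m := Nat.find hP - 1) (by omega)
      push_neg at hmin
      exact hmin
    · have heq : Nat.find hP - 1 + 1 = Nat.find hP := by omega
      rw [heq]; exact hk
  choose c hc1 hc2 using hseg
  have hcu : ∀ j n, mf n ≤ j → j < mf (n+1) → c j = n := by
    intro j n h1 h2
    by_contra hne'
    rcases Nat.lt_or_ge (c j) n with hlt | hge
    · have hm' : mf (c j + 1) ≤ mf n := hmmono (by omega)
      have := hc2 j; omega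
    · have hgt : n < c j := by omega
      have hm' : mf (n+1) ≤ mf (c j) := hmmono (by omega)
      have := hc1 j; omega
  -- the candidate execution
  obtain ⟨st', hst'⟩ : ∃ f : ℕ → SB, ∀ j, f j = (βn (c j)).st (j - mf (c j)) :=
    ⟨_, fun j => rfl⟩
  obtain ⟨act', hact'⟩ : ∃ f : ℕ → Act, ∀ j, f j = (βn (c j)).act (j - mf (c j)) :=
    ⟨_, fun j => rfl⟩
  -- U is constant on segments with equal mf-value
  have hUconst : ∀ a b, a ≤ b → mf a = mf b → U a = U b := by
    intro a b hab
    induction b, hab using Nat.le_induction with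
    | base => intro _; rfl
    | succ b hab ih =>
      intro hm
      have h1 : mf a ≤ mf b := hmmono hab
      have h2 := hmsucc b
      have hmb : mf a = mf b := by omega
      have hlen : (βn b).len = 0 := by omega
      have hU' : U b = U (b+1) := by
        have hl := hlst b
        have hf := hfst b
        rw [FinFrag.lstate, hlen] at hl
        rw [FinFrag.fstate] at hf
        rw [← hl, ← hf]
      rw [ih hmb, hU']
  have hstm : ∀ n, st' (mf n) = U n := by
    intro n
    have h1 := hc1 (mf n)
    have h2 := hc2 (mf n)
    have hle : n ≤ c (mf n) := by
      by_contra hlt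
      push_neg at hlt
      have hm' : mf (c (mf n) + 1) ≤ mf n := hmmono (by omega)
      omega
    have heqm : mf (c (mf n)) = mf n := le_antisymm h1 (hmmono hle)
    have hU' : U n = U (c (mf n)) := hUconst n _ hle heqm.symm
    rw [hst' (mf n), heqm, Nat.sub_self, hU']
    exact hfst _
  have hst : ∀ n t, t ≤ (βn n).len → st' (mf n + t) = (βn n).st t := by
    intro n t ht
    rcases Nat.lt_or_ge t (βn n).len with hlt | hge
    · have hcj : c (mf n + t) = n := hcu _ n (Nat.le_add_right _ _) (by rw [hmsucc]; omega)
      rw [hst', hcj, Nat.add_sub_cancel_left]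
    · have hteq : t = (βn n).len := by omega
      subst hteq
      have hms : mf n + (βn n).len = mf (n+1) := (hmsucc n).symm
      rw [hms, hstm (n+1)]
      exact (hlst n).symm
  have hactEq : ∀ n t, t < (βn n).len → act' (mf n + t) = (βn n).act t := by
    intro n t ht
    have hcj : c (mf n + t) = n := hcu _ n (Nat.le_add_right _ _) (by rw [hmsucc]; omega)
    rw [hact', hcj, Nat.add_sub_cancel_left]
  -- it is an execution of B
  have hstart' : st' 0 ∈ B.start := by
    have h0 := hstm 0
    rw [hm0] at h0
    rw [h0]
    exact hsim.start_cond (α.st 0) hexec.1 (hU 0)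
  have hsteps' : ∀ j, (st' j, act' j, st' (j+1)) ∈ B.steps := by
    intro j
    have h1 := hc1 j
    have h2 := hc2 j
    have hms := hmsucc (c j)
    have ht : j - mf (c j) < (βn (c j)).len := by omega
    have hstep := hfrag (c j) _ ht
    have e2 : st' (j+1) = (βn (c j)).st (j - mf (c j) + 1) := by
      have hj1 : j + 1 = mf (c j) + (j - mf (c j) + 1) := by omega
      rw [hj1, hst (c j) (j - mf (c j) + 1) (by omega)]
    rw [e2, hst' j, hact' j]
    exact hstep
  -- trace condition per segment
  have htr : ∀ n, segTrace B.ext act' (mf n) (mf (n+1)) = atrace A.ext (α.act n) := by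
    intro n
    rw [segTrace]
    have hlen : mf (n+1) - mf n = (βn n).len := by rw [hmsucc]; omega
    rw [hlen]
    have hmap : (List.range (βn n).len).map (fun t => act' (mf n + t)) =
        (List.range (βn n).len).map (βn n).act := by
      apply List.map_congr_left
      intro t htmem
      exact hactEq n t (List.mem_range.mp htmem)
    rw [hmap]
    exact htrβ n
  -- complemented-pair conditions per segment
  have hpR : ∀ q ∈ M, ∀ n, (∃ j, mf n ≤ j ∧ j ≤ mf (n+1) ∧ st' j ∈ q.R) →
      α.st n ∈ (h q).R ∨ α.st (n+1) ∈ (h q).R := by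
    intro q hq n hex
    obtain ⟨j, hj1, hj2, hjR⟩ := hex
    have hms := hmsucc n
    have ht : j - mf n ≤ (βn n).len := by omega
    have e : st' j = (βn n).st (j - mf n) := by
      have he := hst n (j - mf n) ht
      rwa [Nat.add_sub_cancel' hj1] at he
    exact (hpair n q hq).1 ⟨j - mf n, ht, e ▸ hjR⟩
  have hpG : ∀ q ∈ M, ∀ n, (α.st n ∈ (h q).G ∨ α.st (n+1) ∈ (h q).G) →
      ∃ j, mf n ≤ j ∧ j ≤ mf (n+1) ∧ st' j ∈ q.G := by
    intro q hq n hG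
    obtain ⟨t, ht, htG⟩ := (hpair n q hq).2 hG
    refine ⟨mf n + t, Nat.le_add_right _ _, by rw [hmsucc]; omega, ?_⟩
    rw [hst n t ht]
    exact htG
  -- liveness of the constructed execution
  have hrel : ∀ i, (α.st i, st' (mf i)) ∈ g := by
    intro i
    rw [hstm i]
    exact (hU i).1
  have hsat : ∀ q ∈ M, (⟨st', act'⟩ : InfExec SB Act).Sat q := by
    intro q hq hR
    have hαR : InfOften fun n => α.st n ∈ (h q).R := by
      intro N
      obtain ⟨j, hjge, hjR⟩ := hR (mf (N+1) + 1)
      have h1 := hc1 j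
      have h2 := hc2 j
      have hn : N ≤ c j := by
        by_contra hlt
        push_neg at hlt
        have hm' : mf (c j + 1) ≤ mf (N+1) := hmmono (by omega)
        omega
      rcases hpR q hq (c j) ⟨j, h1, le_of_lt h2, hjR⟩ with hc | hc
      · exact ⟨c j, hn, hc⟩
      · exact ⟨c j + 1, by omega, hc⟩
    have hαG : InfOften fun n => α.st n ∈ (h q).G :=
      hsim.h_total q hq α hα hαR
    intro N
    obtain ⟨i0, hi0⟩ := hcof N
    obtain ⟨n, hn, hnG⟩ := hαG i0
    obtain ⟨t, ht1, ht2, htG⟩ := hpG q hq n (Or.inl hnG)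
    refine ⟨t, ?_, htG⟩
    have := hmmono hn
    omega
  refine ⟨⟨st', act'⟩, ⟨⟨hstart', hsteps'⟩, hsat⟩, mf, ?_⟩
  refine ⟨hm0, hmmono, hrel, ?_, hcof, ?_, ?_⟩
  · intro i hi
    obtain ⟨n, rfl⟩ : ∃ n, i = n + 1 := ⟨i - 1, by omega⟩
    simpa using htr n
  · intro q hq i hi hex
    obtain ⟨n, rfl⟩ : ∃ n, i = n + 1 := ⟨i - 1, by omega⟩
    simp only [Nat.add_sub_cancel] at hex ⊢
    exact hpR q hq n hex
  · intro q hq i hi hG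
    obtain ⟨n, rfl⟩ : ∃ n, i = n + 1 := ⟨i - 1, by omega⟩
    simp only [Nat.add_sub_cancel] at hG ⊢
    exact hpG q hq n hG
end

section
/- Liveness Theorem (backward-simulation case): Let (A, L) and (B, M) be live automata with the same external actions. If there exists an image-finite liveness-preserving backward simulation from (A, L) to (B, M) with respect to some invariants, then (A, L) ≤ℓ (B, M) in the live preorder: traces(lexecs(A, L)) ⊆ traces(lexecs(B, M)), i.e., every live trace of (A, L) is a live trace of (B, M). -/
/- Background formalization: automata, executions, traces, complemented-pairs
   liveness conditions, liveness-preserving simulation relations, etc. -/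

open Classical

section Helpers
variable {Act : Type*} (ext : Set Act)

noncomputable def fcnt (act : ℕ → Act) (n : ℕ) : ℕ :=
  (ltrace ext ((List.range n).map act)).length

lemma ltrace_append (l1 l2 : List Act) :
    ltrace ext (l1 ++ l2) = ltrace ext l1 ++ ltrace ext l2 :=
  List.filter_append _ _

lemma ltrace_singleton (a : Act) :
    ltrace ext [a] = if a ∈ ext then [a] else [] := by
  unfold ltrace
  rw [List.filter_singleton]
  by_cases h : a ∈ ext <;> simp [h]

lemma fcnt_zero (act : ℕ → Act) : fcnt ext act 0 = 0 := by
  simp [fcnt, ltrace]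

lemma fcnt_succ (act : ℕ → Act) (n : ℕ) :
    fcnt ext act (n + 1) = fcnt ext act n + (ltrace ext [act n]).length := by
  unfold fcnt
  rw [List.range_succ, List.map_append, ltrace_append, List.length_append]
  rfl

lemma fcnt_add (act : ℕ → Act) (a b : ℕ) :
    fcnt ext act (a + b) =
      fcnt ext act a + (ltrace ext ((List.range b).map fun t => act (a + t))).length := by
  induction b with
  | zero => simp [ltrace]
  | succ b ih =>
      rw [← Nat.add_assoc, fcnt_succ, ih, List.range_succ, List.map_append, ltrace_append,
        List.length_append]
      simp [Nat.add_assoc]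

lemma fcnt_mono (act : ℕ → Act) : Monotone (fcnt ext act) := by
  apply monotone_nat_of_le_succ
  intro n
  rw [fcnt_succ]
  exact Nat.le_add_right _ _

lemma fcnt_ext_succ (act : ℕ → Act) (n : ℕ) (h : act n ∈ ext) :
    fcnt ext act (n + 1) = fcnt ext act n + 1 := by
  rw [fcnt_succ, ltrace_singleton, if_pos h]
  rfl

lemma fcnt_inj (act : ℕ → Act) {i j : ℕ} (hi : act i ∈ ext) (hj : act j ∈ ext)
    (hc : fcnt ext act i = fcnt ext act j) : i = j := by
  by_contra hne
  rcases Nat.lt_or_ge i j with hlt | hge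
  · have := fcnt_ext_succ ext act i hi
    have h2 := fcnt_mono ext act (show i + 1 ≤ j from hlt)
    omega
  · have hlt : j < i := lt_of_le_of_ne hge (fun e => hne e.symm)
    have := fcnt_ext_succ ext act j hj
    have h2 := fcnt_mono ext act (show j + 1 ≤ i from hlt)
    omega

lemma ncard_fcnt (act : ℕ → Act) (n : ℕ) :
    {j | j < n ∧ act j ∈ ext}.ncard = fcnt ext act n := by
  induction n with
  | zero => simp [fcnt_zero]
  | succ n ih =>
      have hfin : {j | j < n ∧ act j ∈ ext}.Finite :=
        (Set.finite_Iio n).subset (fun x hx => hx.1)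
      by_cases h : act n ∈ ext
      · have hset : {j | j < n + 1 ∧ act j ∈ ext} = insert n {j | j < n ∧ act j ∈ ext} := by
          ext j; simp only [Set.mem_setOf_eq, Set.mem_insert_iff]
          constructor
          · rintro ⟨hj, hje⟩
            rcases Nat.lt_succ_iff_lt_or_eq.mp hj with h' | h'
            · exact Or.inr ⟨h', hje⟩
            · exact Or.inl h'
          · rintro (rfl | ⟨hj, hje⟩)
            · exact ⟨Nat.lt_succ_self _, h⟩
            · exact ⟨Nat.lt_succ_of_lt hj, hje⟩
        rw [hset, Set.ncard_insert_of_notMem (by simp) hfin, ih, fcnt_ext_succ ext act n h]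
      · have hset : {j | j < n + 1 ∧ act j ∈ ext} = {j | j < n ∧ act j ∈ ext} := by
          ext j; simp only [Set.mem_setOf_eq]
          constructor
          · rintro ⟨hj, hje⟩
            rcases Nat.lt_succ_iff_lt_or_eq.mp hj with h' | rfl
            · exact ⟨h', hje⟩
            · exact absurd hje h
          · rintro ⟨hj, hje⟩
            exact ⟨Nat.lt_succ_of_lt hj, hje⟩
        rw [hset, ih, fcnt_succ, ltrace_singleton, if_neg h]
        rfl

lemma itrace_congr (act1 act2 : ℕ → Act)
    (h12 : ∀ i, act1 i ∈ ext →
      ∃ j, act2 j ∈ ext ∧ fcnt ext act2 j = fcnt ext act1 i ∧ act2 j = act1 i)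
    (h21 : ∀ j, act2 j ∈ ext →
      ∃ i, act1 i ∈ ext ∧ fcnt ext act1 i = fcnt ext act2 j ∧ act1 i = act2 j) :
    itrace ext act1 = itrace ext act2 := by
  funext n
  unfold itrace
  by_cases h1 : ∃ i, act1 i ∈ ext ∧ {j | j < i ∧ act1 j ∈ ext}.ncard = n
  · have hspec := h1.choose_spec
    set i := h1.choose with hi
    obtain ⟨hie, hic⟩ := hspec
    rw [ncard_fcnt] at hic
    obtain ⟨j, hje, hjc, hjv⟩ := h12 i hie
    have h2 : ∃ j, act2 j ∈ ext ∧ {k | k < j ∧ act2 k ∈ ext}.ncard = n :=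
      ⟨j, hje, by rw [ncard_fcnt]; omega⟩
    rw [dif_pos h1, dif_pos h2]
    have hspec2 := h2.choose_spec
    obtain ⟨hje', hjc'⟩ := hspec2
    rw [ncard_fcnt] at hjc'
    have : h2.choose = j := fcnt_inj ext act2 hje' hje (by omega)
    rw [this, hjv]
  · rw [dif_neg h1]
    rw [dif_neg]
    rintro ⟨j, hje, hjc⟩
    rw [ncard_fcnt] at hjc
    obtain ⟨i, hie, hic, _⟩ := h21 j hje
    exact h1 ⟨i, hie, by rw [ncard_fcnt]; omega⟩

end Helpers


section Konig
variable {S : Type*}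

/-- pigeonhole: a sequence in a finite set hits some value infinitely often -/
lemma pigeon {X : Set S} (hX : X.Finite) (f : ℕ → S) (hf : ∀ n, f n ∈ X) :
    ∃ u, ∀ N, ∃ n, N ≤ n ∧ f n = u := by
  haveI := hX.to_subtype
  obtain ⟨y, hy⟩ := Finite.exists_infinite_fiber (fun n => (⟨f n, hf n⟩ : X))
  refine ⟨y.1, fun N => ?_⟩
  rw [Set.infinite_coe_iff] at hy
  by_contra hc
  push_neg at hc
  refine hy (Set.Finite.subset (Set.finite_Iio N) ?_)
  intro x hx
  simp only [Set.mem_preimage, Set.mem_singleton_iff] at hx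
  by_contra hlt
  simp only [Set.mem_Iio, not_lt] at hlt
  exact hc x hlt (congrArg Subtype.val hx)

def ChainFrom (Lev : ℕ → Set S) (E : ℕ → S → S → Prop) (i n : ℕ) (u : S) : Prop :=
  ∃ c : ℕ → S, c i = u ∧ (∀ t, i ≤ t → t ≤ n → c t ∈ Lev t) ∧
    (∀ t, i ≤ t → t < n → E t (c t) (c (t + 1)))

lemma chainFrom_restrict {Lev : ℕ → Set S} {E : ℕ → S → S → Prop} {i m n : ℕ} {u : S}
    (hmn : m ≤ n) (h : ChainFrom Lev E i n u) : ChainFrom Lev E i m u := by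
  obtain ⟨c, hc0, hc1, hc2⟩ := h
  exact ⟨c, hc0, fun t ht1 ht2 => hc1 t ht1 (ht2.trans hmn),
    fun t ht1 ht2 => hc2 t ht1 (lt_of_lt_of_le ht2 hmn)⟩

lemma konig (Lev : ℕ → Set S) (E : ℕ → S → S → Prop)
    (hfin : ∀ i, (Lev i).Finite) (hne : ∀ i, (Lev i).Nonempty)
    (hback : ∀ i, ∀ u' ∈ Lev (i + 1), ∃ u ∈ Lev i, E i u u') :
    ∃ u : ℕ → S, (∀ i, u i ∈ Lev i) ∧ ∀ i, E i (u i) (u (i + 1)) := by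
  -- backward chains exist
  have hexists : ∀ i d, ∀ w ∈ Lev (i + d), ∃ u ∈ Lev i, ∃ c : ℕ → S,
      c i = u ∧ c (i + d) = w ∧ (∀ t, i ≤ t → t ≤ i + d → c t ∈ Lev t) ∧
      (∀ t, i ≤ t → t < i + d → E t (c t) (c (t + 1))) := by
    intro i d
    induction d with
    | zero =>
        intro w hw
        refine ⟨w, hw, fun _ => w, rfl, rfl, fun t ht1 ht2 => ?_, fun t ht1 ht2 => by omega⟩
        have : t = i := by omega
        subst this
        simpa using hw
    | succ d ih =>
        intro w hw
        obtain ⟨v, hv, hE⟩ := hback (i + d) w (by rwa [← Nat.add_assoc] at hw)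
        obtain ⟨u, hu, c, hc0, hcl, hc1, hc2⟩ := ih v hv
        refine ⟨u, hu, Function.update c (i + d + 1) w, ?_, ?_, ?_, ?_⟩
        · rw [Function.update_of_ne (by omega)]; exact hc0
        · rw [show i + (d + 1) = i + d + 1 from by omega, Function.update_self]
        · intro t ht1 ht2
          rcases Nat.lt_or_ge t (i + d + 1) with h' | h'
          · rw [Function.update_of_ne (by omega)]
            exact hc1 t ht1 (by omega)
          · have : t = i + d + 1 := by omega
            subst this
            rw [Function.update_self]
            rwa [← Nat.add_assoc] at hw
        · intro t ht1 ht2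
          rcases Nat.lt_or_ge t (i + d) with h' | h'
          · rw [Function.update_of_ne (by omega), Function.update_of_ne (by omega)]
            exact hc2 t ht1 h'
          · have : t = i + d := by omega
            subst this
            rw [Function.update_of_ne (by omega), Function.update_self, hcl]
            exact hE
  have hchain : ∀ i d, ∃ u ∈ Lev i, ChainFrom Lev E i (i + d) u := by
    intro i d
    obtain ⟨u, hu, c, hc0, _, hc1, hc2⟩ := hexists i d ((hne (i + d)).some) (hne (i + d)).some_mem
    exact ⟨u, hu, c, hc0, hc1, hc2⟩
  -- Q i u : u ∈ Lev i and has arbitrarily long forward chains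
  have hQ : ∀ i, ∃ u, u ∈ Lev i ∧ ∀ d, ChainFrom Lev E i (i + d) u := by
    intro i
    choose f hf1 hf2 using hchain i
    obtain ⟨u, hu⟩ := pigeon (hfin i) f hf1
    refine ⟨u, ?_, fun d => ?_⟩
    · obtain ⟨n, _, hn⟩ := hu 0
      exact hn ▸ hf1 n
    · obtain ⟨n, hdn, hn⟩ := hu d
      exact hn ▸ chainFrom_restrict (by omega) (hf2 n)
  -- extend one step
  have hstep : ∀ i u, u ∈ Lev i → (∀ d, ChainFrom Lev E i (i + d) u) →
      ∃ u', (u' ∈ Lev (i + 1) ∧ ∀ d, ChainFrom Lev E (i + 1) (i + 1 + d) u') ∧ E i u u' := by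
    intro i u hu hch
    have key : ∀ d, ∃ u', (u' ∈ Lev (i + 1) ∧ ChainFrom Lev E (i + 1) (i + 1 + d) u') ∧
        E i u u' := by
      intro d
      obtain ⟨c, hc0, hc1, hc2⟩ := hch (d + 1)
      refine ⟨c (i + 1), ⟨hc1 (i + 1) (by omega) (by omega), c, rfl, ?_, ?_⟩, ?_⟩
      · intro t ht1 ht2
        exact hc1 t (by omega) (by omega)
      · intro t ht1 ht2
        exact hc2 t (by omega) (by omega)
      · have := hc2 i (le_refl i) (by omega)
        rwa [hc0] at this
    choose f hf1 hfE using key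
    obtain ⟨u', hu'⟩ := pigeon (hfin (i + 1)) f (fun d => (hf1 d).1)
    refine ⟨u', ⟨?_, fun d => ?_⟩, ?_⟩
    · obtain ⟨n, _, hn⟩ := hu' 0
      exact hn ▸ (hf1 n).1
    · obtain ⟨n, hdn, hn⟩ := hu' d
      exact hn ▸ chainFrom_restrict (by omega) (hf1 n).2
    · obtain ⟨n, _, hn⟩ := hu' 0
      exact hn ▸ hfE n
  choose step hstep1 hstepE using hstep
  have h0 := hQ 0
  let F : ∀ n : ℕ, {u : S // u ∈ Lev n ∧ ∀ d, ChainFrom Lev E n (n + d) u} :=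
    fun n => Nat.rec ⟨h0.choose, h0.choose_spec⟩
      (fun n p => ⟨step n p.1 p.2.1 p.2.2, hstep1 n p.1 p.2.1 p.2.2⟩) n
  refine ⟨fun n => (F n).1, fun n => (F n).2.1, fun n => ?_⟩
  have : F (n + 1) = ⟨step n (F n).1 (F n).2.1 (F n).2.2,
      hstep1 n (F n).1 (F n).2.1 (F n).2.2⟩ := rfl
  show E n (F n).1 (F (n + 1)).1
  rw [this]
  exact hstepE n (F n).1 (F n).2.1 (F n).2.2

end Konig

section Glue
variable {SB Act : Type*}

noncomputable def gm (β : ℕ → FinFrag SB Act) : ℕ → ℕ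
  | 0 => 0
  | n + 1 => gm β n + (β n).len

lemma gm_mono (β : ℕ → FinFrag SB Act) : Monotone (gm β) := by
  apply monotone_nat_of_le_succ
  intro n
  show gm β n ≤ gm β n + (β n).len
  omega

noncomputable def gidx (β : ℕ → FinFrag SB Act) (hub : ∀ n : ℕ, ∃ i, n < gm β (i + 1))
    (n : ℕ) : ℕ := Nat.find (hub n)

noncomputable def glue (β : ℕ → FinFrag SB Act) (hub : ∀ n : ℕ, ∃ i, n < gm β (i + 1)) :
    InfExec SB Act :=
  ⟨fun n => (β (gidx β hub n)).st (n - gm β (gidx β hub n)),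
   fun n => (β (gidx β hub n)).act (n - gm β (gidx β hub n))⟩

variable (β : ℕ → FinFrag SB Act) (hub : ∀ n : ℕ, ∃ i, n < gm β (i + 1))

lemma gidx_lt (n : ℕ) : n < gm β (gidx β hub n + 1) := Nat.find_spec (hub n)

lemma gm_gidx_le (n : ℕ) : gm β (gidx β hub n) ≤ n := by
  rcases Nat.eq_zero_or_pos (gidx β hub n) with h | h
  · rw [h]
    show (0 : ℕ) ≤ n
    omega
  · have hm := Nat.find_min (hub n) (show gidx β hub n - 1 < gidx β hub n from by omega)
    push_neg at hm
    rwa [show gidx β hub n - 1 + 1 = gidx β hub n from by omega] at hm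

lemma glue_pos (n : ℕ) : n - gm β (gidx β hub n) < (β (gidx β hub n)).len := by
  have h1 := gidx_lt β hub n
  have h2 := gm_gidx_le β hub n
  have h3 : gm β (gidx β hub n + 1) = gm β (gidx β hub n) + (β (gidx β hub n)).len := rfl
  omega

lemma gidx_ge (i j n : ℕ) (hn : n = gm β i + j) (hj : j ≤ (β i).len) : i ≤ gidx β hub n := by
  by_contra hlt
  push_neg at hlt
  have h1 := gidx_lt β hub n
  have h2 : gm β (gidx β hub n + 1) ≤ gm β i := gm_mono β (by omega)
  omega

lemma gidx_eq (i j n : ℕ) (hn : n = gm β i + j) (hj : j < (β i).len) : gidx β hub n = i := by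
  have h1 := gidx_ge β hub i j n hn (le_of_lt hj)
  have h2 : gidx β hub n ≤ i := by
    apply Nat.find_le
    show n < gm β (i + 1)
    have : gm β (i + 1) = gm β i + (β i).len := rfl
    omega
  omega

lemma glue_act (i j : ℕ) (hj : j < (β i).len) :
    (glue β hub).act (gm β i + j) = (β i).act j := by
  show (β (gidx β hub (gm β i + j))).act (gm β i + j - gm β (gidx β hub (gm β i + j)))
      = (β i).act j
  rw [gidx_eq β hub i j _ rfl hj, Nat.add_sub_cancel_left]

lemma gm_const (hcomp : ∀ i, (β (i + 1)).fstate = (β i).lstate) (a b : ℕ) (hab : a ≤ b)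
    (heq : gm β a = gm β b) : (β a).fstate = (β b).fstate := by
  induction b, hab using Nat.le_induction with
  | base => rfl
  | succ b hab ih =>
      have h1 : gm β a ≤ gm β b := gm_mono β hab
      have h2 : gm β (b + 1) = gm β b + (β b).len := rfl
      have hlen : (β b).len = 0 := by omega
      have := hcomp b
      rw [this]
      rw [ih (by omega)]
      show (β b).fstate = (β b).st (β b).len
      rw [hlen]
      rfl

lemma glue_st (hcomp : ∀ i, (β (i + 1)).fstate = (β i).lstate) (i j : ℕ)
    (hj : j ≤ (β i).len) : (glue β hub).st (gm β i + j) = (β i).st j := by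
  set n := gm β i + j with hn
  set k := gidx β hub n with hk
  have hki : i ≤ k := gidx_ge β hub i j n hn hj
  rcases Nat.lt_or_ge j (β i).len with hlt | hge
  · have : k = i := gidx_eq β hub i j n hn hlt
    show (β k).st (n - gm β k) = (β i).st j
    rw [this, hn, Nat.add_sub_cancel_left]
  · have hjl : j = (β i).len := le_antisymm hj hge
    have h1 := gm_gidx_le β hub n
    rw [← hk] at h1
    have h2 : gm β (i + 1) = gm β i + (β i).len := rfl
    rcases Nat.lt_or_ge k (i + 1) with hik | hik
    · have : k = i := by omega
      show (β k).st (n - gm β k) = (β i).st j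
      rw [this, hn, Nat.add_sub_cancel_left]
    · have h3 : gm β (i + 1) ≤ gm β k := gm_mono β hik
      have heq : gm β (i + 1) = gm β k := by omega
      have hnk : n - gm β k = 0 := by omega
      show (β k).st (n - gm β k) = (β i).st j
      rw [hnk]
      have : (β k).st 0 = (β k).fstate := rfl
      rw [this, ← gm_const β hcomp (i + 1) k hik heq, hcomp i]
      show (β i).lstate = (β i).st j
      rw [hjl]
      rfl

end Glue


/-- Liveness Theorem, backward-simulation case: an image-finite
liveness-preserving backward simulation implies the live preorder. -/
theorem stmt9 {SA SB Act : Type*} (A : Automaton SA Act) (B : Automaton SB Act)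
    (L : Set (CPair SA)) (M : Set (CPair SB))
    (hL : IsLivenessCondition A L) (hM : IsLivenessCondition B M)
    (hext : A.ext = B.ext)
    (hsim : ∃ (IA : Set SA) (IB : Set SB) (g : Set (SA × SB)) (h : CPair SB → CPair SA),
      IsAutInvariant A IA ∧ IsAutInvariant B IB ∧
        IsLPBackwardSim A B L M IA IB g h ∧ ImageFinite g) :
    tracesOf A.ext (lexecs A L) ⊆ tracesOf B.ext (lexecs B M) := by
  obtain ⟨IA, IB, g, h, hIA, hIB, hsim, hgfin⟩ := hsim
  intro x hx
  obtain ⟨α, hαmem, rfl⟩ := hx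
  obtain ⟨hαexec, hαsat⟩ := hαmem
  -- all states of α are in the invariant IA
  have hreach : ∀ i, α.st i ∈ IA := by
    intro i
    apply hIA
    exact ⟨⟨i, α.st, α.act⟩, ⟨fun t _ => hαexec.2 t, hαexec.1⟩, i, le_refl i, rfl⟩
  -- the levels and edges of the induced digraph
  have hfin : ∀ i, (gImg g (α.st i) ∩ IB).Finite :=
    fun i => (hgfin (α.st i)).subset Set.inter_subset_left
  have hne : ∀ i, (gImg g (α.st i) ∩ IB).Nonempty :=
    fun i => hsim.nonempty_cond (α.st i) (hreach i)
  have hback : ∀ i, ∀ u' ∈ gImg g (α.st (i + 1)) ∩ IB,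
      ∃ u ∈ gImg g (α.st i) ∩ IB,
        (fun i u u' => ∃ β : FinFrag SB Act, β.IsFragOf B ∧ β.fstate = u ∧ β.lstate = u' ∧
          β.trace B.ext = atrace A.ext (α.act i) ∧
          ∀ q ∈ M, (β.Meets q.R → α.st i ∈ (h q).R ∨ α.st (i + 1) ∈ (h q).R) ∧
            ((α.st i ∈ (h q).G ∨ α.st (i + 1) ∈ (h q).G) → β.Meets q.G)) i u u' := by
    intro i u' hu'
    obtain ⟨β, hβ1, hβ2, hβ3, hβ4, hβ5⟩ :=
      hsim.step_cond (α.st i) (α.act i) (α.st (i + 1)) (hαexec.2 i) (hreach i) u' hu'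
    exact ⟨β.fstate, hβ2, β, hβ1, rfl, hβ3, hβ4, hβ5⟩
  obtain ⟨u, humem, huE⟩ := konig (fun i => gImg g (α.st i) ∩ IB) _ hfin hne hback
  have huE' : ∀ i, ∃ β : FinFrag SB Act, β.IsFragOf B ∧ β.fstate = u i ∧
      β.lstate = u (i + 1) ∧ β.trace B.ext = atrace A.ext (α.act i) ∧
      ∀ q ∈ M, (β.Meets q.R → α.st i ∈ (h q).R ∨ α.st (i + 1) ∈ (h q).R) ∧
        ((α.st i ∈ (h q).G ∨ α.st (i + 1) ∈ (h q).G) → β.Meets q.G) := fun i => huE i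
  choose βs hβfrag hβf hβl hβtr hβpair using huE'
  have hcomp : ∀ i, (βs (i + 1)).fstate = (βs i).lstate :=
    fun i => (hβf (i + 1)).trans (hβl i).symm
  -- infinitely many fragments have positive length
  have hpos : ∀ N, ∃ i, N ≤ i ∧ (βs i).len ≠ 0 := by
    intro N
    obtain ⟨n, hn1, hn2⟩ := hsim.nonsilent α ⟨hαexec, hαsat⟩ N
    refine ⟨n, hn1, fun h0 => hn2 ?_⟩
    exact ⟨hreach n, βs n, hβfrag n, hβf n ▸ humem n,
      (hβl n ▸ (humem (n + 1)).1 : (βs n).lstate ∈ gImg g (α.st (n + 1))), hβtr n, h0⟩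
  have hub' : ∀ N, ∃ i, N ≤ gm βs i := by
    intro N
    induction N with
    | zero => exact ⟨0, Nat.zero_le _⟩
    | succ N ih =>
        obtain ⟨i, hi⟩ := ih
        obtain ⟨i', hi'1, hi'2⟩ := hpos i
        refine ⟨i' + 1, ?_⟩
        have h1 : gm βs i ≤ gm βs i' := gm_mono βs hi'1
        have h2 : gm βs (i' + 1) = gm βs i' + (βs i').len := rfl
        omega
  have hub : ∀ n : ℕ, ∃ i, n < gm βs (i + 1) := by
    intro n
    obtain ⟨i, hi⟩ := hub' (n + 1)
    rcases i with _ | k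
    · exact absurd hi (by simp [gm])
    · exact ⟨k, by omega⟩
  set e := glue βs hub with he
  -- e is an execution of B
  have hestep : ∀ n, (e.st n, e.act n, e.st (n + 1)) ∈ B.steps := by
    intro n
    have hlt := glue_pos βs hub n
    have hle := gm_gidx_le βs hub n
    have hst' := glue_st βs hub hcomp (gidx βs hub n) (n - gm βs (gidx βs hub n) + 1)
      (by omega)
    rw [show gm βs (gidx βs hub n) + (n - gm βs (gidx βs hub n) + 1) = n + 1 from by omega]
      at hst'
    show ((βs (gidx βs hub n)).st (n - gm βs (gidx βs hub n)),
      (βs (gidx βs hub n)).act (n - gm βs (gidx βs hub n)), e.st (n + 1)) ∈ B.steps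
    rw [hst']
    exact hβfrag (gidx βs hub n) _ hlt
  have hestart : e.st 0 ∈ B.start := by
    have h0 : e.st 0 = (βs (gidx βs hub 0)).st 0 := by
      show (βs (gidx βs hub 0)).st (0 - gm βs (gidx βs hub 0)) = _
      rw [Nat.zero_sub]
    have hle := gm_gidx_le βs hub 0
    have hgm : gm βs 0 = gm βs (gidx βs hub 0) := by
      have : gm βs 0 = 0 := rfl
      omega
    have hc := gm_const βs hcomp 0 (gidx βs hub 0) (Nat.zero_le _) hgm
    have hu0 : e.st 0 = u 0 := by
      rw [h0]
      show (βs (gidx βs hub 0)).fstate = u 0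
      rw [← hc, hβf 0]
    rw [hu0]
    exact hsim.start_cond (α.st 0) hαexec.1 (humem 0)
  -- trace analysis
  have hseg1 : ∀ i t, t < (βs i).len → (βs i).act t ∈ B.ext →
      fcnt B.ext (βs i).act t = 0 ∧ α.act i ∈ A.ext ∧ (βs i).act t = α.act i := by
    intro i t ht hte
    have htr := hβtr i
    have hmem : (βs i).act t ∈ (βs i).trace B.ext := by
      unfold FinFrag.trace ltrace
      rw [List.mem_filter]
      refine ⟨List.mem_map.mpr ⟨t, List.mem_range.mpr ht, rfl⟩, by simpa using hte⟩
    rw [htr] at hmem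
    unfold atrace at hmem
    by_cases haext : α.act i ∈ A.ext
    · rw [if_pos haext] at hmem
      have hval : (βs i).act t = α.act i := List.mem_singleton.mp hmem
      refine ⟨?_, haext, hval⟩
      have h1 : fcnt B.ext (βs i).act (t + 1) = fcnt B.ext (βs i).act t + 1 :=
        fcnt_ext_succ B.ext (βs i).act t hte
      have h2 : fcnt B.ext (βs i).act (t + 1) ≤ fcnt B.ext (βs i).act (βs i).len :=
        fcnt_mono B.ext (βs i).act (by omega)
      have h3 : fcnt B.ext (βs i).act (βs i).len = 1 := by
        show (ltrace B.ext ((List.range (βs i).len).map (βs i).act)).length = 1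
        have : ltrace B.ext ((List.range (βs i).len).map (βs i).act)
            = (βs i).trace B.ext := rfl
        rw [this, htr]
        unfold atrace
        rw [if_pos haext]
        rfl
      omega
    · rw [if_neg haext] at hmem
      exact absurd hmem List.not_mem_nil
  have hkey : ∀ i, ∀ t ≤ (βs i).len, fcnt B.ext e.act (gm βs i + t) =
      fcnt B.ext e.act (gm βs i) + fcnt B.ext (βs i).act t := by
    intro i t ht
    have hmap : List.map (fun s => e.act (gm βs i + s)) (List.range t)
        = List.map (βs i).act (List.range t) := by
      apply List.map_congr_left
      intro s hs
      rw [List.mem_range] at hs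
      exact glue_act βs hub i s (by omega)
    rw [fcnt_add, hmap]
    rfl
  have hcnt0 : ∀ i, fcnt B.ext e.act (gm βs i) = fcnt B.ext α.act i := by
    intro i
    induction i with
    | zero =>
        have : gm βs 0 = 0 := rfl
        rw [this, fcnt_zero, fcnt_zero]
    | succ i ih =>
        have h1 : gm βs (i + 1) = gm βs i + (βs i).len := rfl
        rw [h1, hkey i (βs i).len (le_refl _), ih, fcnt_succ]
        congr 1
        have h2 : fcnt B.ext (βs i).act (βs i).len = ((βs i).trace B.ext).length := rfl
        rw [h2, hβtr i]
        unfold atrace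
        rw [ltrace_singleton]
        rw [hext]
  -- the two transfer directions for itrace
  have h12 : ∀ i, α.act i ∈ B.ext → ∃ j, e.act j ∈ B.ext ∧
      fcnt B.ext e.act j = fcnt B.ext α.act i ∧ e.act j = α.act i := by
    intro i hie
    have haext : α.act i ∈ A.ext := hext ▸ hie
    have htr := hβtr i
    have hmem : α.act i ∈ (βs i).trace B.ext := by
      rw [htr]
      unfold atrace
      rw [if_pos haext]
      exact List.mem_singleton.mpr rfl
    unfold FinFrag.trace ltrace at hmem
    rw [List.mem_filter] at hmem
    obtain ⟨t, htr', htv⟩ := List.mem_map.mp hmem.1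
    rw [List.mem_range] at htr'
    have hte : (βs i).act t ∈ B.ext := htv.symm ▸ hie
    obtain ⟨hc0, _, _⟩ := hseg1 i t htr' hte
    refine ⟨gm βs i + t, ?_, ?_, ?_⟩
    · rw [glue_act βs hub i t htr']
      exact hte
    · rw [hkey i t (le_of_lt htr'), hcnt0 i, hc0]
      omega
    · rw [glue_act βs hub i t htr', htv]
  have h21 : ∀ j, e.act j ∈ B.ext → ∃ i, α.act i ∈ B.ext ∧
      fcnt B.ext α.act i = fcnt B.ext e.act j ∧ α.act i = e.act j := by
    intro j hje
    have hlt := glue_pos βs hub j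
    have hle := gm_gidx_le βs hub j
    have hje' : (βs (gidx βs hub j)).act (j - gm βs (gidx βs hub j)) ∈ B.ext := hje
    obtain ⟨hc0, haext, hval⟩ := hseg1 (gidx βs hub j) _ hlt hje'
    refine ⟨gidx βs hub j, hext ▸ haext, ?_, ?_⟩
    · have hdec : fcnt B.ext e.act j
          = fcnt B.ext e.act (gm βs (gidx βs hub j) + (j - gm βs (gidx βs hub j))) := by
        congr 1
        omega
      rw [hdec, hkey _ _ (le_of_lt hlt), hcnt0, hc0]
      omega
    · show α.act (gidx βs hub j) = (βs (gidx βs hub j)).act (j - gm βs (gidx βs hub j))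
      exact hval.symm
  -- liveness of e with respect to M
  have hesat : ∀ q ∈ M, e.Sat q := by
    intro q hq hR
    have hαR : InfOften fun i => α.st i ∈ (h q).R := by
      intro N
      obtain ⟨n, hn1, hn2⟩ := hR (gm βs (N + 1))
      have h1 := gidx_lt βs hub n
      have hiN : N ≤ gidx βs hub n := by
        by_contra hc
        push_neg at hc
        have := gm_mono βs (show gidx βs hub n + 1 ≤ N + 1 from by omega)
        omega
      have hmeets : (βs (gidx βs hub n)).Meets q.R :=
        ⟨n - gm βs (gidx βs hub n), le_of_lt (glue_pos βs hub n), hn2⟩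
      rcases (hβpair (gidx βs hub n) q hq).1 hmeets with hc | hc
      · exact ⟨gidx βs hub n, hiN, hc⟩
      · exact ⟨gidx βs hub n + 1, by omega, hc⟩
    have hαG := hsim.h_total q hq α ⟨hαexec, hαsat⟩ hαR
    intro N
    obtain ⟨i0, hi0⟩ := hub' N
    obtain ⟨i, hi1, hi2⟩ := hαG i0
    obtain ⟨t, ht1, ht2⟩ := (hβpair i q hq).2 (Or.inl hi2)
    refine ⟨gm βs i + t, ?_, ?_⟩
    · have := gm_mono βs hi1
      omega
    · show (glue βs hub).st (gm βs i + t) ∈ q.G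
      rw [glue_st βs hub hcomp i t ht1]
      exact ht2
  refine ⟨e, ⟨⟨hestart, hestep⟩, hesat⟩, ?_⟩
  rw [hext]
  exact (itrace_congr B.ext α.act e.act h12 h21).symm
end

section
/- Lattice Lemma: Let (A, L) be a live automaton and let (P, ≺) be a complemented-pairs lattice over clos(L), with ⊥ = bottom(P) and ⊤ = top(P). Then ⟨⊥.R, ⊤.G⟩ ∈ clos(L); that is, every live execution of (A, L) that contains infinitely many states in ⊥.R also contains infinitely many states in ⊤.G. -/
/- Background formalization: automata, executions, traces, complemented-pairs
   liveness conditions, liveness-preserving simulation relations, etc. -/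

open Classical

/-- Pigeonhole for `InfOften` over a finite index set. -/
theorem infOften_finset_pigeon {ι : Type*} (T : Finset ι) (Q : ι → ℕ → Prop)
    (h : InfOften fun n => ∃ w ∈ T, Q w n) : ∃ w ∈ T, InfOften (Q w) := by
  by_contra hc
  push_neg at hc
  have hb : ∀ w : ι, ∃ N : ℕ, w ∈ T → ∀ m, N ≤ m → ¬ Q w m := by
    intro w
    by_cases hw : w ∈ T
    · have := hc w hw
      unfold InfOften at this
      push_neg at this
      obtain ⟨N, hN⟩ := this
      exact ⟨N, fun _ m hm => hN m hm⟩
    · exact ⟨0, fun h' => absurd h' hw⟩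
  choose N hN using hb
  obtain ⟨m, hm, w, hwT, hQ⟩ := h (T.sup N)
  exact hN w hwT m (le_trans (Finset.le_sup hwT) hm) hQ

/-- Lattice Lemma. If `(P, ≺)` is a complemented-pairs lattice
over `clos(L)` with bottom `⊥` and top `⊤`, then `⟨⊥.R, ⊤.G⟩ ∈ clos(L)`. -/
theorem stmt10 {S Act : Type*} (A : Automaton S Act) (L : Set (CPair S))
    (hL : IsLivenessCondition A L)
    (P : Set (CPair S)) (lt : CPair S → CPair S → Prop)
    (hPsub : P ⊆ closL A L) (hPfin : P.Finite)
    (hirr : ∀ r ∈ P, ¬ lt r r)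
    (htrans : ∀ r ∈ P, ∀ w ∈ P, ∀ v ∈ P, lt r w → lt w v → lt r v)
    (bot top : CPair S) (hbot : bot ∈ P) (htop : top ∈ P)
    (hbotmin : ∀ r ∈ P, pLe lt bot r) (htopmax : ∀ r ∈ P, pLe lt r top)
    (hsucc : ∀ r ∈ P, r ≠ top → r.G ⊆ ⋃ w ∈ succSet P lt r, w.R) :
    CPair.mk bot.R top.G ∈ closL A L := by
  intro e he hR
  -- upper set of r
  set U : CPair S → Finset (CPair S) := fun r => hPfin.toFinset.filter (fun v => lt r v) with hU
  -- main claim by strong induction on the size of the upper set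
  have main : ∀ n : ℕ, ∀ r ∈ P, (U r).card ≤ n →
      (InfOften fun m => e.st m ∈ r.R) → InfOften fun m => e.st m ∈ top.G := by
    intro n
    induction n with
    | zero =>
      intro r hr hcard hInf
      have hG : InfOften fun m => e.st m ∈ r.G := hPsub hr e he hInf
      rcases htopmax r hr with hlt | heq
      · exfalso
        have : top ∈ U r := by
          simp only [hU, Finset.mem_filter, Set.Finite.mem_toFinset]
          exact ⟨htop, hlt⟩
        have := Finset.card_pos.mpr ⟨top, this⟩
        omega
      · rw [heq] at hG; exact hG
    | succ n ih =>
      intro r hr hcard hInf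
      have hG : InfOften fun m => e.st m ∈ r.G := hPsub hr e he hInf
      by_cases heq : r = top
      · rw [heq] at hG; exact hG
      · have hsub := hsucc r hr heq
        -- succ set as a finset
        have hInf' : InfOften fun m => ∃ w ∈ hPfin.toFinset.filter
            (fun w => w ∈ succSet P lt r), e.st m ∈ w.R := by
          intro k
          obtain ⟨m, hm, hmem⟩ := hG k
          obtain ⟨_, ⟨w, rfl⟩, hw2⟩ := hsub hmem
          simp only [Set.mem_iUnion] at hw2
          obtain ⟨hwsucc, hw2⟩ := hw2
          refine ⟨m, hm, w, ?_, hw2⟩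
          simp only [Finset.mem_filter, Set.Finite.mem_toFinset]
          exact ⟨hwsucc.1, hwsucc⟩
        obtain ⟨w, hwmem, hwInf⟩ := infOften_finset_pigeon _ _ hInf'
        simp only [Finset.mem_filter, Set.Finite.mem_toFinset] at hwmem
        obtain ⟨hwP, _, hrw, _⟩ := hwmem
        -- (U w).card < (U r).card
        have hssub : U w ⊂ U r := by
          constructor
          · intro v hv
            simp only [hU, Finset.mem_filter, Set.Finite.mem_toFinset] at hv ⊢
            exact ⟨hv.1, htrans r hr w hwP v hv.1 hrw hv.2⟩
          · intro hle
            have : w ∈ U r := by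
              simp only [hU, Finset.mem_filter, Set.Finite.mem_toFinset]
              exact ⟨hwP, hrw⟩
            have := hle this
            simp only [hU, Finset.mem_filter, Set.Finite.mem_toFinset] at this
            exact hirr w hwP this.2
        have hlt' : (U w).card < (U r).card := Finset.card_lt_card hssub
        exact ih w hwP (by omega) hwInf
  exact main (U bot).card bot hbot le_rfl hR
end

section
/- Chaining of complemented-pairs: Let (A, L) be a live automaton, let r ∈ clos(L), and let W be a finite subset of clos(L) such that r.G ⊆ ⋃_{w ∈ W} w.R. Then ⟨r.R, ⋃_{w ∈ W} w.G⟩ ∈ clos(L); in particular, for every live execution α of (A, L), if α contains infinitely many states in r.R then α contains infinitely many states in ⋃_{w ∈ W} w.G. -/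
/- Background formalization: automata, executions, traces, complemented-pairs
   liveness conditions, liveness-preserving simulation relations, etc. -/

open Classical

/-- chaining of complemented-pairs. -/
theorem stmt11 {S Act : Type*} (A : Automaton S Act) (L : Set (CPair S))
    (hL : IsLivenessCondition A L)
    (r : CPair S) (hr : r ∈ closL A L)
    (W : Set (CPair S)) (hWfin : W.Finite) (hWsub : W ⊆ closL A L)
    (hRG : r.G ⊆ ⋃ w ∈ W, w.R) :
    CPair.mk r.R (⋃ w ∈ W, w.G) ∈ closL A L ∧
      ∀ α ∈ lexecs A L,
        InfOften (fun n => α.st n ∈ r.R) → InfOften (fun n => α.st n ∈ ⋃ w ∈ W, w.G) := by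
  have key : ∀ α ∈ lexecs A L,
      InfOften (fun n => α.st n ∈ r.R) → InfOften (fun n => α.st n ∈ ⋃ w ∈ W, w.G) := by
    intro α hα hR
    -- from r ∈ closL, infinitely often in r.G
    have hG : InfOften (fun n => α.st n ∈ r.G) := hr α hα hR
    -- so infinitely often in ⋃ w.R
    have hUR : InfOften (fun n => α.st n ∈ ⋃ w ∈ W, w.R) := by
      intro n
      obtain ⟨m, hm, hmem⟩ := hG n
      exact ⟨m, hm, hRG hmem⟩
    -- pigeonhole: some w ∈ W has infinitely often in w.R
    by_contra hcon
    unfold InfOften at hcon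
    push_neg at hcon
    obtain ⟨n0, hn0⟩ := hcon
    -- for each w ∈ W, not InfOften in w.G (else contradiction), hence by hWsub
    -- not InfOften in w.R
    have hnotR : ∀ w ∈ W, ¬ InfOften (fun n => α.st n ∈ w.R) := by
      intro w hw hIO
      have hIOG := hWsub hw α hα hIO
      obtain ⟨m, hm, hmem⟩ := hIOG n0
      exact hn0 m hm (Set.mem_biUnion hw hmem)
    -- extract bounds
    have hbound : ∀ w ∈ W, ∃ N, ∀ m, N ≤ m → α.st m ∉ w.R := by
      intro w hw
      have := hnotR w hw
      unfold InfOften at this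
      push_neg at this
      obtain ⟨N, hN⟩ := this
      exact ⟨N, fun m hm hmem => (hN m hm) hmem⟩
    choose! N hN using hbound
    have hfin := hWfin
    set B := hfin.toFinset.sup N with hB
    obtain ⟨m, hm, hmem⟩ := hUR B
    obtain ⟨Rw, ⟨w, rfl⟩, hmw⟩ := hmem
    simp only [Set.mem_iUnion] at hmw
    obtain ⟨hw, hmw⟩ := hmw
    have hNw : N w ≤ B := Finset.le_sup (hfin.mem_toFinset.mpr hw)
    exact hN w hw m (hNw.trans hm) hmw
  exact ⟨fun α hα => key α hα, key⟩
end

section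
/- Let A be an automaton and let φ be a robust live execution property for A such that no state occurs infinitely often along any execution in φ. Let γ, α ∈ execs^ω(A) with γ ∈ φ and α ∉ φ. Then there exists a set G ⊆ states(A) such that γ contains infinitely many states in G and no state of α is in G (i.e., γ ⊨ □◇G and α ⊨ □¬G). -/
/- Background formalization: automata, executions, traces, complemented-pairs
   liveness conditions, liveness-preserving simulation relations, etc. -/

open Classical

/-- an execution in a robust live execution property `φ` (along
whose executions no state repeats infinitely often) can be distinguished from
an execution outside `φ` by a simple Büchi condition. -/
theorem stmt12 {S Act : Type*} (A : Automaton S Act) (φ : Set (InfExec S Act))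
    (hφ : IsLiveExecProperty A φ) (hrob : Robust A φ) (hnorep : NoInfRep φ)
    (γ α : InfExec S Act) (hγe : γ.IsExecOf A) (hαe : α.IsExecOf A)
    (hγ : γ ∈ φ) (hα : α ∉ φ) :
    ∃ G : Set S, InfOften (fun n => γ.st n ∈ G) ∧ ∀ n, α.st n ∉ G := by
  refine ⟨Set.range γ.st \ Set.range α.st, ?_, ?_⟩
  · by_contra h
    simp only [InfOften, not_forall, not_exists, not_and] at h
    obtain ⟨N, hN⟩ := h
    have hmem : ∀ i : ℕ, ∃ j, α.st j = γ.st (N + i) := by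
      intro i
      have h1 : γ.st (N + i) ∉ Set.range γ.st \ Set.range α.st :=
        hN (N + i) (Nat.le_add_right N i)
      have h2 : γ.st (N + i) ∈ Set.range γ.st := ⟨N + i, rfl⟩
      by_contra hc
      exact h1 ⟨h2, fun ⟨j, hj⟩ => hc ⟨j, hj⟩⟩
    choose m hm using hmem
    have hsub : Subsumes γ α := by
      refine ⟨N, m, hm, fun i => ?_⟩
      have hfin : {n | γ.st n = α.st i}.Finite := hnorep γ hγ (α.st i)
      have : {j | m j = i} ⊆ (fun j => N + j) ⁻¹' {n | γ.st n = α.st i} := by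
        intro j hj
        simp only [Set.mem_preimage, Set.mem_setOf_eq]
        rw [← hm j, hj]
      exact (hfin.preimage (Set.injOn_of_injective (fun a b hab => by omega))).subset this
    exact hα (hrob γ α hγe hαe hsub hγ)
  · rintro n ⟨-, hn⟩
    exact hn ⟨n, rfl⟩
end
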